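/- Littlewood decomposition of doubled distinct partitions: for any positive integer t, the Littlewood map Ω restricts to a bijection between doubled distinct partitions λ and tuples (λ̃, λ⁰, λ¹, ..., λ^{t-1}) where λ̃ is a doubled distinct t-core, λ⁰ is a doubled distinct partition, λ¹, ..., λ^{t-1} are arbitrary partitions with λ^{t-i} = (λ^i)* for 1 ≤ i ≤ t-1, and the weight satisfies |λ| = |λ̃| + t(|λ⁰| + |λ¹| + ... + |λ^{t-1}|). -/

import Mathlib

open scoped Classical

/-- An integer partition, given by its (0-indexed) sequence of parts. -/
structure IntPartition where
  parts : ℕ → ℕ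
  antitone : Antitone parts
  finite_support : (Function.support parts).Finite

namespace IntPartition

/-- The weight `|λ|` of a partition: the sum of its parts. -/
noncomputable def weight (p : IntPartition) : ℕ := p.finite_support.toFinset.sum p.parts

/-- The conjugate partition, as a function: `conj j` is the number of parts `> j`. -/
noncomputable def conj (p : IntPartition) (j : ℕ) : ℕ := {i | j < p.parts i}.ncard

/-- The cells (boxes) of the Ferrers diagram, 0-indexed. -/
def cells (p : IntPartition) : Set (ℕ × ℕ) := {c | c.2 < p.parts c.1}

lemma cells_finite (p : IntPartition) : p.cells.Finite := by
  have hsub : p.cells ⊆ (Function.support p.parts) ×ˢ (Set.Iio (p.parts 0)) := by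
    rintro ⟨i, j⟩ h
    have hj : j < p.parts i := h
    constructor
    · simp only [Function.mem_support]
      omega
    · exact lt_of_lt_of_le hj (p.antitone (Nat.zero_le i))
  exact (p.finite_support.prod (Set.finite_Iio _)).subset hsub

/-- The cells of the Ferrers diagram as a finset. -/
noncomputable def cellsFinset (p : IntPartition) : Finset (ℕ × ℕ) := p.cells_finite.toFinset

/-- Hook length of the (0-indexed) box `(i,j)`:  `λ_i - j + λ*_j - i - 1` (1-indexed formula). -/
noncomputable def hook (p : IntPartition) (i j : ℕ) : ℕ := p.parts i + p.conj j - i - j - 1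

/-- The multiset of hook lengths of all boxes of `p`. -/
noncomputable def hooks (p : IntPartition) : Multiset ℕ :=
  p.cellsFinset.val.map fun c => p.hook c.1 c.2

/-- The Durfee length: the side of the largest square contained in the diagram. -/
noncomputable def durfee (p : IntPartition) : ℕ := {i | i < p.parts i}.ncard

/-- The sign `δ_λ = (-1)^{D(λ)}`. -/
noncomputable def delta (p : IntPartition) : ℤ := (-1) ^ p.durfee

/-- Self-conjugate partitions: `λ = λ*`. -/
noncomputable def IsSelfConjugate (p : IntPartition) : Prop := ∀ j, p.conj j = p.parts j

/-- Doubled distinct partitions: `λ_i = λ*_i + 1` for `i` in the Durfee square. -/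
noncomputable def IsDoubledDistinct (p : IntPartition) : Prop :=
  ∀ i < p.durfee, p.parts i = p.conj i + 1

/-- `t`-cores: partitions with no hook length divisible by `t`. -/
noncomputable def IsCore (t : ℕ) (p : IntPartition) : Prop := ∀ h ∈ p.hooks, ¬ t ∣ h

/-- The multiset of signed hook lengths `ε_h · h`, where `ε_h = -1` for boxes strictly
above the diagonal and `1` otherwise. -/
noncomputable def signedHooks (p : IntPartition) : Multiset ℤ :=
  p.cellsFinset.val.map fun c => (if c.1 < c.2 then -1 else 1) * (p.hook c.1 c.2 : ℤ)

/-- The multiset of signed hook lengths `ε_h · h` over boxes whose hook length is a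
multiple of `t`. -/
noncomputable def signedHooksT (t : ℕ) (p : IntPartition) : Multiset ℤ :=
  (p.cellsFinset.filter fun c => t ∣ p.hook c.1 c.2).val.map
    fun c => (if c.1 < c.2 then -1 else 1) * (p.hook c.1 c.2 : ℤ)

/-- The multiset of principal hook lengths (hooks of diagonal boxes). -/
noncomputable def principalHooks (p : IntPartition) : Multiset ℕ :=
  (Finset.range p.durfee).val.map fun i => p.hook i i

lemma conj_set_finite (p : IntPartition) (j : ℕ) : {i | j < p.parts i}.Finite := by
  apply p.finite_support.subset
  intro i hi
  simp only [Set.mem_setOf_eq] at hi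
  simp only [Function.mem_support]
  omega

/-- The conjugate partition, as a `IntPartition`. -/
noncomputable def conjugate (p : IntPartition) : IntPartition where
  parts := p.conj
  antitone := fun a b hab =>
    Set.ncard_le_ncard (fun i hi => lt_of_le_of_lt hab hi) (p.conj_set_finite a)
  finite_support := by
    apply (Set.finite_Iio (p.parts 0)).subset
    intro j hj
    obtain ⟨i, hi⟩ := Set.nonempty_of_ncard_ne_zero hj
    exact lt_of_lt_of_le hi (p.antitone (Nat.zero_le i))

end IntPartition

/-- "Infinite" product `∏_{k ≥ 1} f k` of power series, defined coefficientwise;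
this is the honest infinite product whenever `f k ≡ 1 mod X^k`. -/
noncomputable def Pinf {R : Type*} [CommRing R] (f : ℕ → PowerSeries R) : PowerSeries R :=
  PowerSeries.mk fun n => PowerSeries.coeff n (∏ k ∈ Finset.range (n + 1), f (k + 1))

/-- The Euler-type product `E R m = ∏_{k ≥ 1} (1 - x^{m k}) = (q^m; q^m)_∞`. -/
noncomputable def E (R : Type*) [CommRing R] (m : ℕ) : PowerSeries R :=
  Pinf fun k => 1 - PowerSeries.X ^ (m * k)

/-- The binomial series `(1 - x^m)^a` for an exponent `a` in a binomial ring. -/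
noncomputable def binomSeries {R : Type*} [CommRing R] [BinomialRing R] (a : R) (m : ℕ) :
    PowerSeries R :=
  PowerSeries.mk fun n => if m ∣ n then (-1) ^ (n / m) * Ring.choose a (n / m) else 0

/-- `m` is the position of a vertical step (a `0`) in the canonical bi-infinite binary
word of the partition `p`. -/
def zeroPos (p : IntPartition) (m : ℤ) : Prop := ∃ i : ℕ, (p.parts i : ℤ) - i - 1 = m

/-- The Littlewood decomposition, as a relation: `core` and `quot` are the `t`-core and
`t`-quotient of `lam`, expressed via the binary-word encoding: the `k`-th subsequence of
the word of `lam` is the word of `quot k` (up to the shift `s k`), and the `k`-th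
subsequence of the word of `core` is the corresponding flushed word `...000111...` with
the same charge. -/
def IsLittlewood (t : ℕ) (lam core : IntPartition) (quot : ℕ → IntPartition) : Prop :=
  ∃ s : ℕ → ℤ,
    (∀ k < t, ∀ j : ℤ, zeroPos (quot k) j ↔ zeroPos lam (t * (j + s k) + k)) ∧
    (∀ k < t, ∀ j : ℤ, zeroPos core (t * (j + s k) + k) ↔ j < 0)

namespace LW

open Finset

/-- `Z` is cofinite below `-N` and avoids everything `≥ N`. -/
def Bnd (Z : Set ℤ) (N : ℕ) : Prop :=
  (∀ m : ℤ, m < -(N:ℤ) → m ∈ Z) ∧ (∀ m : ℤ, (N:ℤ) ≤ m → m ∉ Z)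

def HasB (Z : Set ℤ) : Prop := ∃ N, Bnd Z N

lemma posSet_finite {Z : Set ℤ} (h : HasB Z) : {m : ℤ | 0 ≤ m ∧ m ∈ Z}.Finite := by
  obtain ⟨N, h1, h2⟩ := h
  apply (Set.finite_Icc (0:ℤ) N).subset
  rintro m ⟨hm, hmZ⟩
  refine ⟨hm, ?_⟩
  by_contra hc; push_neg at hc; exact h2 m (by omega) hmZ

lemma negSet_finite {Z : Set ℤ} (h : HasB Z) : {m : ℤ | m < 0 ∧ m ∉ Z}.Finite := by
  obtain ⟨N, h1, h2⟩ := h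
  apply (Set.finite_Icc (-(N:ℤ)) 0).subset
  rintro m ⟨hm, hmZ⟩
  constructor
  · by_contra hc; push_neg at hc; exact hmZ (h1 m (by omega))
  · omega

noncomputable def posF (Z : Set ℤ) : Finset ℤ :=
  if h : {m : ℤ | 0 ≤ m ∧ m ∈ Z}.Finite then h.toFinset else ∅

noncomputable def negF (Z : Set ℤ) : Finset ℤ :=
  if h : {m : ℤ | m < 0 ∧ m ∉ Z}.Finite then h.toFinset else ∅

lemma mem_posF {Z : Set ℤ} (h : HasB Z) {m : ℤ} :
    m ∈ posF Z ↔ 0 ≤ m ∧ m ∈ Z := by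
  rw [posF, dif_pos (posSet_finite h), Set.Finite.mem_toFinset]; rfl

lemma mem_negF {Z : Set ℤ} (h : HasB Z) {m : ℤ} :
    m ∈ negF Z ↔ m < 0 ∧ m ∉ Z := by
  rw [negF, dif_pos (negSet_finite h), Set.Finite.mem_toFinset]; rfl

/-- The charge of `Z`. -/
noncomputable def charge (Z : Set ℤ) : ℤ := (posF Z).card - (negF Z).card

/-- The basic "size" sum of `Z`. -/
noncomputable def Ssum (Z : Set ℤ) : ℤ := (∑ m ∈ posF Z, m) + ∑ m ∈ negF Z, (-m)

/-- The weight sum of `Z`; equals the weight of the associated partition if charge 0. -/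
noncomputable def wsum (Z : Set ℤ) : ℤ := Ssum Z + charge Z

/-- Shift: `shiftI d Z = Z - d`. -/
def shiftI (d : ℤ) (Z : Set ℤ) : Set ℤ := {m | m + d ∈ Z}

@[simp] lemma mem_shiftI {d : ℤ} {Z : Set ℤ} {m : ℤ} : m ∈ shiftI d Z ↔ m + d ∈ Z := Iff.rfl

lemma shiftI_shiftI (d e : ℤ) (Z : Set ℤ) : shiftI d (shiftI e Z) = shiftI (d + e) Z := by
  ext m; simp [shiftI, add_assoc]

@[simp] lemma shiftI_zero (Z : Set ℤ) : shiftI 0 Z = Z := by ext m; simp [shiftI]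

lemma hasB_shiftI {Z : Set ℤ} (h : HasB Z) (d : ℤ) : HasB (shiftI d Z) := by
  obtain ⟨N, h1, h2⟩ := h
  refine ⟨N + d.natAbs, ?_, ?_⟩
  · intro m hm
    refine h1 (m + d) ?_
    have : ((N + d.natAbs : ℕ) : ℤ) = (N : ℤ) + d.natAbs := by push_cast; ring
    omega
  · intro m hm
    refine h2 (m + d) ?_
    have : ((N + d.natAbs : ℕ) : ℤ) = (N : ℤ) + d.natAbs := by push_cast; ring
    omega

lemma posF_shift_one {Z : Set ℤ} (h : HasB Z) :
    posF (shiftI 1 Z) = ((posF Z).erase 0).image (fun m => m - 1) := by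
  ext m
  simp only [mem_posF (hasB_shiftI h 1), mem_shiftI, Finset.mem_image, Finset.mem_erase,
    mem_posF h]
  constructor
  · rintro ⟨hm, hmz⟩; exact ⟨m + 1, ⟨by omega, by omega, hmz⟩, by ring⟩
  · rintro ⟨x, ⟨hx0, hx1, hx2⟩, rfl⟩; exact ⟨by omega, by simpa using hx2⟩

lemma negF_shift_one {Z : Set ℤ} (h : HasB Z) :
    negF (shiftI 1 Z) = ((negF Z).image (fun m => m - 1)) ∪
      (if (0:ℤ) ∈ Z then ∅ else {(-1:ℤ)}) := by
  ext m
  constructor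
  · intro hm
    rw [mem_negF (hasB_shiftI h 1)] at hm
    obtain ⟨hm0, hmz⟩ := hm
    simp only [mem_shiftI] at hmz
    rcases eq_or_ne m (-1) with rfl | hne
    · simp only [neg_add_cancel] at hmz
      simp [hmz]
    · refine Finset.mem_union_left _ ?_
      refine Finset.mem_image.2 ⟨m + 1, ?_, by ring⟩
      rw [mem_negF h]
      exact ⟨by omega, hmz⟩
  · intro hm
    rw [mem_negF (hasB_shiftI h 1)]
    rcases Finset.mem_union.1 hm with hm | hm
    · obtain ⟨x, hx, rfl⟩ := Finset.mem_image.1 hm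
      rw [mem_negF h] at hx
      exact ⟨by omega, by simpa using hx.2⟩
    · by_cases h0 : (0:ℤ) ∈ Z
      · simp [h0] at hm
      · simp only [h0, if_neg, if_false, Finset.mem_singleton] at hm
        subst hm
        exact ⟨by omega, by simpa using h0⟩

lemma sum_posF_shift_one {Z : Set ℤ} (h : HasB Z) (f : ℤ → ℤ) :
    (∑ m ∈ posF (shiftI 1 Z), f m) =
      (∑ m ∈ posF Z, f (m - 1)) - (if (0:ℤ) ∈ Z then f (-1) else 0) := by
  have hinj : ∀ a ∈ (posF Z).erase 0, ∀ b ∈ (posF Z).erase 0,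
      a - 1 = b - 1 → a = b := fun a _ b _ hab => by omega
  rw [posF_shift_one h, Finset.sum_image hinj]
  by_cases h0 : (0:ℤ) ∈ Z
  · have h0m : (0:ℤ) ∈ posF Z := (mem_posF h).2 ⟨le_refl 0, h0⟩
    rw [if_pos h0, Finset.sum_erase_eq_sub h0m]
    norm_num
  · have h0m : (0:ℤ) ∉ posF Z := fun hc => h0 ((mem_posF h).1 hc).2
    rw [if_neg h0, Finset.erase_eq_of_notMem h0m]
    ring

lemma sum_negF_shift_one {Z : Set ℤ} (h : HasB Z) (f : ℤ → ℤ) :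
    (∑ m ∈ negF (shiftI 1 Z), f m) =
      (∑ m ∈ negF Z, f (m - 1)) + (if (0:ℤ) ∈ Z then 0 else f (-1)) := by
  have hinj : ∀ a ∈ negF Z, ∀ b ∈ negF Z, a - 1 = b - 1 → a = b := fun a _ b _ hab => by omega
  rw [negF_shift_one h]
  by_cases h0 : (0:ℤ) ∈ Z
  · rw [if_pos h0, if_pos h0, Finset.union_empty, Finset.sum_image hinj, add_zero]
  · have hdisj : Disjoint ((negF Z).image (fun m => m - 1)) ({(-1:ℤ)} : Finset ℤ) := by
      simp only [Finset.disjoint_singleton_right, Finset.mem_image]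
      rintro ⟨x, hx, hx1⟩
      rw [mem_negF h] at hx
      omega
    rw [if_neg h0, if_neg h0, Finset.sum_union hdisj, Finset.sum_image hinj,
      Finset.sum_singleton]

lemma card_eq_sum_one (s : Finset ℤ) : (s.card : ℤ) = ∑ _m ∈ s, (1:ℤ) := by
  simp

lemma charge_shift_one {Z : Set ℤ} (h : HasB Z) :
    charge (shiftI 1 Z) = charge Z - 1 := by
  have hp := sum_posF_shift_one h (fun _ => (1:ℤ))
  have hn := sum_negF_shift_one h (fun _ => (1:ℤ))
  by_cases h0 : (0:ℤ) ∈ Z <;> simp [h0] at hp hn <;> unfold charge <;> omega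

lemma Ssum_shift_one {Z : Set ℤ} (h : HasB Z) :
    Ssum Z = Ssum (shiftI 1 Z) + charge (shiftI 1 Z) := by
  have hp := sum_posF_shift_one h (fun m => m)
  have hn := sum_negF_shift_one h (fun m => -m)
  have hp1 := sum_posF_shift_one h (fun _ => (1:ℤ))
  have hn1 := sum_negF_shift_one h (fun _ => (1:ℤ))
  have e1 : ∑ m ∈ posF Z, (m - 1) = (∑ m ∈ posF Z, m) - (posF Z).card := by
    rw [Finset.sum_sub_distrib, Finset.sum_const, nsmul_eq_mul, mul_one]
  have e2 : ∑ m ∈ negF Z, -(m - 1) = (∑ m ∈ negF Z, -m) + (negF Z).card := by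
    rw [show (fun m : ℤ => -(m-1)) = fun m : ℤ => (-m) + 1 from by funext m; ring]
    rw [Finset.sum_add_distrib, Finset.sum_const, nsmul_eq_mul, mul_one]
  rw [Ssum, Ssum, hp, hn, e1, e2, charge_shift_one h, charge]
  by_cases h0 : (0:ℤ) ∈ Z <;> simp [h0] <;> ring

/-- charge of arbitrary shift. -/
lemma charge_shiftI {Z : Set ℤ} (h : HasB Z) (d : ℤ) :
    charge (shiftI d Z) = charge Z - d := by
  induction d using Int.induction_on with
  | zero => simp
  | succ n ih =>
    have : shiftI (n + 1 : ℤ) Z = shiftI 1 (shiftI n Z) := by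
      rw [shiftI_shiftI]; ring_nf
    rw [this, charge_shift_one (hasB_shiftI h n), ih]; ring
  | pred n ih =>
    have h1 : shiftI (-(n:ℤ)) Z = shiftI 1 (shiftI (-n - 1) Z) := by
      rw [shiftI_shiftI]; ring_nf
    have := charge_shift_one (hasB_shiftI h (-(n:ℤ) - 1))
    rw [← h1] at this
    rw [ih] at this
    omega

lemma Ssum_shiftI {Z : Set ℤ} (h : HasB Z) (s : ℤ) (hc : charge Z = s) :
    2 * Ssum Z = 2 * Ssum (shiftI s Z) + s * (s - 1) := by
  induction s using Int.induction_on generalizing Z with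
  | zero => simp at hc ⊢
  | succ n ih =>
    have h1 : charge (shiftI 1 Z) = (n:ℤ) := by
      rw [charge_shift_one h, hc]; ring
    have h2 := ih (hasB_shiftI h 1) h1
    have h3 : shiftI (n:ℤ) (shiftI 1 Z) = shiftI ((n:ℤ)+1) Z := by rw [shiftI_shiftI]
    rw [h3] at h2
    have h4 := Ssum_shift_one h
    rw [h1] at h4
    rw [h4]
    linear_combination h2
  | pred n ih =>
    -- charge Z = -n - 1
    have hZ' : HasB (shiftI (-1) Z) := hasB_shiftI h (-1)
    have h1 : charge (shiftI (-1) Z) = -(n:ℤ) := by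
      rw [charge_shiftI h]; rw [hc]; ring
    have h2 := ih hZ' h1
    have h3 : shiftI (-(n:ℤ)) (shiftI (-1) Z) = shiftI (-(n:ℤ) - 1) Z := by
      rw [shiftI_shiftI]; ring_nf
    rw [h3] at h2
    -- Ssum (shiftI (-1) Z) = Ssum Z + charge Z
    have h4 := Ssum_shift_one hZ'
    have h5 : shiftI 1 (shiftI (-1) Z) = Z := by rw [shiftI_shiftI]; simp
    rw [h5] at h4
    rw [hc] at h4
    rw [h4] at h2
    linear_combination h2


/-! ### Residue decomposition -/

def resSet (t k : ℕ) (Z : Set ℤ) : Set ℤ := {j | (t:ℤ) * j + k ∈ Z}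

@[simp] lemma mem_resSet {t k : ℕ} {Z : Set ℤ} {j : ℤ} :
    j ∈ resSet t k Z ↔ (t:ℤ) * j + k ∈ Z := Iff.rfl

lemma hasB_resSet {Z : Set ℤ} (h : HasB Z) (t k : ℕ) (ht : 0 < t) :
    HasB (resSet t k Z) := by
  obtain ⟨N, h1, h2⟩ := h
  have ht1 : (1:ℤ) ≤ (t:ℤ) := by exact_mod_cast ht
  refine ⟨N + k, ?_, ?_⟩
  · intro j hj
    refine h1 _ ?_
    have : (t:ℤ) * j ≤ 1 * j := mul_le_mul_of_nonpos_right ht1 (by push_cast at hj; omega)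
    push_cast at hj ⊢; omega
  · intro j hj hmem
    have hj0 : (0:ℤ) ≤ j := by push_cast at hj; omega
    have : 1 * j ≤ (t:ℤ) * j := mul_le_mul_of_nonneg_right ht1 hj0
    refine h2 _ ?_ hmem
    push_cast at hj ⊢; omega

lemma res_div {t k : ℕ} (ht : 0 < t) (hk : k < t) (j : ℤ) :
    ((t:ℤ) * j + k) / t = j ∧ ((t:ℤ) * j + k) % t = k := by
  have h0 : (0:ℤ) ≤ k := by positivity
  have h1 : (k:ℤ) < t := by exact_mod_cast hk
  have ht' : (t:ℤ) ≠ 0 := by positivity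
  constructor
  · rw [add_comm, Int.add_mul_ediv_left _ _ ht', Int.ediv_eq_zero_of_lt h0 h1, zero_add]
  · rw [add_comm, Int.add_mul_emod_self_left, Int.emod_eq_of_lt h0 h1]

lemma self_div {t : ℕ} (ht : 0 < t) (m : ℤ) :
    (t:ℤ) * (m / t) + (m % t) = m := Int.mul_ediv_add_emod m t

lemma emod_bounds {t : ℕ} (ht : 0 < t) (m : ℤ) : 0 ≤ m % (t:ℤ) ∧ m % (t:ℤ) < t := by
  have ht' : (0:ℤ) < t := by exact_mod_cast ht
  exact ⟨Int.emod_nonneg m (by positivity), Int.emod_lt_of_pos m ht'⟩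

lemma sum_posF_decomp {t : ℕ} (ht : 0 < t) {Z : Set ℤ} (h : HasB Z) (f : ℤ → ℤ) :
    ∑ m ∈ posF Z, f m =
      ∑ k ∈ Finset.range t, ∑ j ∈ posF (resSet t k Z), f ((t:ℤ) * j + k) := by
  rw [← Finset.sum_sigma (Finset.range t) (fun k => posF (resSet t k Z))
    (fun x => f ((t:ℤ) * x.2 + x.1))]
  refine Finset.sum_nbij' (fun m => ⟨(m % (t:ℤ)).toNat, m / (t:ℤ)⟩)
    (fun x => (t:ℤ) * x.2 + x.1) ?_ ?_ ?_ ?_ ?_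
  · intro m hm
    rw [mem_posF h] at hm
    obtain ⟨hm0, hmZ⟩ := hm
    obtain ⟨he0, helt⟩ := emod_bounds ht m
    have hcast : (((m % (t:ℤ)).toNat : ℕ) : ℤ) = m % (t:ℤ) := Int.toNat_of_nonneg he0
    refine Finset.mem_sigma.2 ⟨?_, ?_⟩
    · simp only [Finset.mem_range]; omega
    · rw [mem_posF (hasB_resSet h t _ ht)]
      refine ⟨Int.ediv_nonneg hm0 (by positivity), ?_⟩
      rw [mem_resSet, hcast, self_div ht]
      exact hmZ
  · rintro ⟨k, j⟩ hx
    obtain ⟨hk, hj⟩ := Finset.mem_sigma.1 hx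
    simp only [Finset.mem_range] at hk
    rw [mem_posF (hasB_resSet h t _ ht)] at hj
    dsimp only at hj ⊢
    rw [mem_posF h]
    have hk0 : (0:ℤ) ≤ k := by positivity
    have ht1 : (1:ℤ) ≤ (t:ℤ) := by exact_mod_cast ht
    have : 1 * j ≤ (t:ℤ) * j := mul_le_mul_of_nonneg_right ht1 hj.1
    exact ⟨by omega, hj.2⟩
  · intro m hm
    rw [mem_posF h] at hm
    obtain ⟨he0, helt⟩ := emod_bounds ht m
    have hcast : (((m % (t:ℤ)).toNat : ℕ) : ℤ) = m % (t:ℤ) := Int.toNat_of_nonneg he0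
    simp only
    rw [hcast]
    exact self_div ht m
  · rintro ⟨k, j⟩ hx
    obtain ⟨hk, hj⟩ := Finset.mem_sigma.1 hx
    simp only [Finset.mem_range] at hk
    obtain ⟨hd, he⟩ := res_div ht hk j
    simp only
    ext
    · simp [he]
    · simp [hd]
  · intro m hm
    obtain ⟨he0, helt⟩ := emod_bounds ht m
    have hcast : (((m % (t:ℤ)).toNat : ℕ) : ℤ) = m % (t:ℤ) := Int.toNat_of_nonneg he0
    simp only
    rw [hcast, self_div ht]

lemma sum_negF_decomp {t : ℕ} (ht : 0 < t) {Z : Set ℤ} (h : HasB Z) (f : ℤ → ℤ) :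
    ∑ m ∈ negF Z, f m =
      ∑ k ∈ Finset.range t, ∑ j ∈ negF (resSet t k Z), f ((t:ℤ) * j + k) := by
  rw [← Finset.sum_sigma (Finset.range t) (fun k => negF (resSet t k Z))
    (fun x => f ((t:ℤ) * x.2 + x.1))]
  refine Finset.sum_nbij' (fun m => ⟨(m % (t:ℤ)).toNat, m / (t:ℤ)⟩)
    (fun x => (t:ℤ) * x.2 + x.1) ?_ ?_ ?_ ?_ ?_
  · intro m hm
    rw [mem_negF h] at hm
    obtain ⟨hm0, hmZ⟩ := hm
    obtain ⟨he0, helt⟩ := emod_bounds ht m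
    have hcast : (((m % (t:ℤ)).toNat : ℕ) : ℤ) = m % (t:ℤ) := Int.toNat_of_nonneg he0
    have hsd := self_div ht m
    refine Finset.mem_sigma.2 ⟨?_, ?_⟩
    · simp only [Finset.mem_range]; omega
    · rw [mem_negF (hasB_resSet h t _ ht)]
      have ht1 : (1:ℤ) ≤ (t:ℤ) := by exact_mod_cast ht
      have hjneg : m / (t:ℤ) < 0 := by
        by_contra hc
        push_neg at hc
        have : 1 * (m / (t:ℤ)) ≤ (t:ℤ) * (m / (t:ℤ)) := mul_le_mul_of_nonneg_right ht1 hc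
        omega
      refine ⟨hjneg, ?_⟩
      rw [mem_resSet, hcast, self_div ht]
      exact hmZ
  · rintro ⟨k, j⟩ hx
    obtain ⟨hk, hj⟩ := Finset.mem_sigma.1 hx
    simp only [Finset.mem_range] at hk
    rw [mem_negF (hasB_resSet h t _ ht)] at hj
    dsimp only at hj ⊢
    rw [mem_negF h]
    have hkt : (k:ℤ) < t := by exact_mod_cast hk
    have ht1 : (1:ℤ) ≤ (t:ℤ) := by exact_mod_cast ht
    have : (t:ℤ) * j ≤ (t:ℤ) * (-1) := mul_le_mul_of_nonneg_left (by omega) (by positivity)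
    exact ⟨by omega, hj.2⟩
  · intro m hm
    obtain ⟨he0, helt⟩ := emod_bounds ht m
    have hcast : (((m % (t:ℤ)).toNat : ℕ) : ℤ) = m % (t:ℤ) := Int.toNat_of_nonneg he0
    simp only
    rw [hcast]
    exact self_div ht m
  · rintro ⟨k, j⟩ hx
    obtain ⟨hk, hj⟩ := Finset.mem_sigma.1 hx
    simp only [Finset.mem_range] at hk
    obtain ⟨hd, he⟩ := res_div ht hk j
    simp only
    ext
    · simp [he]
    · simp [hd]
  · intro m hm
    obtain ⟨he0, helt⟩ := emod_bounds ht m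
    have hcast : (((m % (t:ℤ)).toNat : ℕ) : ℤ) = m % (t:ℤ) := Int.toNat_of_nonneg he0
    simp only
    rw [hcast, self_div ht]

lemma charge_decomp {t : ℕ} (ht : 0 < t) {Z : Set ℤ} (h : HasB Z) :
    charge Z = ∑ k ∈ Finset.range t, charge (resSet t k Z) := by
  have hp := sum_posF_decomp ht h (fun _ => (1:ℤ))
  have hn := sum_negF_decomp ht h (fun _ => (1:ℤ))
  rw [charge, card_eq_sum_one, card_eq_sum_one, hp, hn, ← Finset.sum_sub_distrib]
  refine Finset.sum_congr rfl fun k _ => ?_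
  rw [charge, card_eq_sum_one, card_eq_sum_one]

lemma wsum_decomp {t : ℕ} (ht : 0 < t) {Z : Set ℤ} (h : HasB Z) :
    wsum Z = ∑ k ∈ Finset.range t,
      ((t:ℤ) * Ssum (resSet t k Z) + ((k:ℤ)+1) * charge (resSet t k Z)) := by
  have hp := sum_posF_decomp ht h (fun m => m + 1)
  have hn := sum_negF_decomp ht h (fun m => -m - 1)
  have e1 : wsum Z = (∑ m ∈ posF Z, (m + 1)) + ∑ m ∈ negF Z, (-m - 1) := by
    rw [wsum, Ssum, charge, Finset.sum_add_distrib, Finset.sum_sub_distrib,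
      Finset.sum_const, Finset.sum_const, nsmul_eq_mul, nsmul_eq_mul, mul_one, mul_one]
    ring
  rw [e1, hp, hn, ← Finset.sum_add_distrib]
  refine Finset.sum_congr rfl fun k _ => ?_
  rw [Ssum, charge, card_eq_sum_one, card_eq_sum_one]
  have l1 : ∑ j ∈ posF (resSet t k Z), ((t:ℤ)*j + k + 1) =
      (t:ℤ) * (∑ j ∈ posF (resSet t k Z), j) +
        ((k:ℤ)+1) * ∑ _j ∈ posF (resSet t k Z), (1:ℤ) := by
    rw [Finset.mul_sum, Finset.mul_sum, ← Finset.sum_add_distrib]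
    exact Finset.sum_congr rfl fun j _ => by ring
  have l2 : ∑ j ∈ negF (resSet t k Z), (-((t:ℤ)*j + k) - 1) =
      (t:ℤ) * (∑ j ∈ negF (resSet t k Z), (-j)) -
        ((k:ℤ)+1) * ∑ _j ∈ negF (resSet t k Z), (1:ℤ) := by
    rw [Finset.mul_sum, Finset.mul_sum, ← Finset.sum_sub_distrib]
    exact Finset.sum_congr rfl fun j _ => by ring
  rw [l1, l2]
  ring

/-! ### Conjugation of beta-sets -/

def conjS (Z : Set ℤ) : Set ℤ := {m | -1 - m ∉ Z}

@[simp] lemma mem_conjS {Z : Set ℤ} {m : ℤ} : m ∈ conjS Z ↔ -1 - m ∉ Z := Iff.rfl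

lemma conjS_conjS (Z : Set ℤ) : conjS (conjS Z) = Z := by
  ext m
  have he : -1 - (-1 - m) = m := by ring
  rw [mem_conjS, mem_conjS, he, not_not]

lemma hasB_conjS {Z : Set ℤ} (h : HasB Z) : HasB (conjS Z) := by
  obtain ⟨N, h1, h2⟩ := h
  refine ⟨N + 1, ?_, ?_⟩
  · intro m hm
    rw [mem_conjS]
    intro hc
    exact h2 _ (by push_cast at hm ⊢; omega) hc
  · intro m hm
    rw [mem_conjS, not_not]
    exact h1 _ (by push_cast at hm ⊢; omega)

lemma posF_conjS {Z : Set ℤ} (h : HasB Z) :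
    posF (conjS Z) = (negF Z).image (fun m => -1 - m) := by
  ext m
  rw [mem_posF (hasB_conjS h), Finset.mem_image]
  constructor
  · rintro ⟨hm0, hm⟩
    exact ⟨-1 - m, (mem_negF h).2 ⟨by omega, by simpa using hm⟩, by ring⟩
  · rintro ⟨x, hx, rfl⟩
    rw [mem_negF h] at hx
    exact ⟨by omega, by simpa using hx.2⟩

lemma negF_conjS {Z : Set ℤ} (h : HasB Z) :
    negF (conjS Z) = (posF Z).image (fun m => -1 - m) := by
  ext m
  rw [mem_negF (hasB_conjS h), Finset.mem_image]
  constructor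
  · rintro ⟨hm0, hm⟩
    rw [mem_conjS, not_not] at hm
    exact ⟨-1 - m, (mem_posF h).2 ⟨by omega, hm⟩, by ring⟩
  · rintro ⟨x, hx, rfl⟩
    rw [mem_posF h] at hx
    refine ⟨by omega, ?_⟩
    rw [mem_conjS, not_not]
    simpa using hx.2

lemma charge_conjS {Z : Set ℤ} (h : HasB Z) : charge (conjS Z) = -charge Z := by
  have hinj : Function.Injective (fun m : ℤ => -1 - m) := fun a b hab => by
    simp only at hab; omega
  rw [charge, charge, posF_conjS h, negF_conjS h,
    Finset.card_image_of_injective _ hinj, Finset.card_image_of_injective _ hinj]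
  ring

lemma conjS_shiftI (d : ℤ) (Z : Set ℤ) : conjS (shiftI d Z) = shiftI (-d) (conjS Z) := by
  ext m
  rw [mem_conjS, mem_shiftI, mem_shiftI, mem_conjS]
  have : -1 - m + d = -1 - (m + -d) := by ring
  rw [this]

/-! ### Flushed (Iio) sets -/

lemma hasB_Iio (e : ℤ) : HasB (Set.Iio e) := by
  refine ⟨e.natAbs + 1, ?_, ?_⟩
  · intro m hm
    simp only [Set.mem_Iio]
    omega
  · intro m hm
    simp only [Set.mem_Iio, not_lt]
    omega

lemma posF_Iio (e : ℤ) : posF (Set.Iio e) = Finset.Ico 0 e := by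
  ext m
  rw [mem_posF (hasB_Iio e), Finset.mem_Ico]
  simp [Set.mem_Iio]

lemma negF_Iio (e : ℤ) : negF (Set.Iio e) = Finset.Ico e 0 := by
  ext m
  rw [mem_negF (hasB_Iio e), Finset.mem_Ico]
  simp only [Set.mem_Iio, not_lt]
  omega

lemma charge_Iio (e : ℤ) : charge (Set.Iio e) = e := by
  rw [charge, posF_Iio, negF_Iio, Int.card_Ico, Int.card_Ico]
  omega

lemma Ssum_Iio (e : ℤ) : 2 * Ssum (Set.Iio e) = e * (e - 1) := by
  have hsh : shiftI e (Set.Iio e) = Set.Iio 0 := by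
    ext m
    simp only [mem_shiftI, Set.mem_Iio]
    omega
  have h0 : Ssum (Set.Iio (0:ℤ)) = 0 := by
    have hp : posF (Set.Iio (0:ℤ)) = ∅ := by
      rw [posF_Iio]; rfl
    have hn : negF (Set.Iio (0:ℤ)) = ∅ := by
      rw [negF_Iio]; rfl
    rw [Ssum, hp, hn]; simp
  have := Ssum_shiftI (hasB_Iio e) e (charge_Iio e)
  rw [hsh, h0] at this
  simpa using this


/-! ### Partitions and beta-sets -/

/-- The beta-set of a partition: the set of positions of zeros in its word. -/
def Bp (p : IntPartition) : Set ℤ := {m | zeroPos p m}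

def beta (p : IntPartition) (i : ℕ) : ℤ := (p.parts i : ℤ) - i - 1

lemma mem_Bp {p : IntPartition} {m : ℤ} : m ∈ Bp p ↔ ∃ i : ℕ, beta p i = m := Iff.rfl

lemma beta_strictAnti (p : IntPartition) : StrictAnti (beta p) := by
  intro i j hij
  have := p.antitone (le_of_lt hij)
  unfold beta
  omega

lemma supportBound (p : IntPartition) : ∃ K : ℕ, ∀ i, K ≤ i → p.parts i = 0 := by
  obtain ⟨K, hK⟩ := p.finite_support.bddAbove
  refine ⟨K + 1, fun i hi => ?_⟩
  by_contra hc
  have : i ∈ Function.support p.parts := hc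
  have := hK this
  omega

lemma hasB_Bp (p : IntPartition) : HasB (Bp p) := by
  obtain ⟨K, hK⟩ := supportBound p
  refine ⟨p.parts 0 + K + 1, ?_, ?_⟩
  · intro m hm
    refine ⟨(-m - 1).toNat, ?_⟩
    have h1 : ((-m - 1).toNat : ℤ) = -m - 1 := Int.toNat_of_nonneg (by push_cast at hm; omega)
    have h2 : p.parts (-m - 1).toNat = 0 := by
      apply hK
      push_cast at hm
      omega
    show (p.parts ((-m - 1).toNat) : ℤ) - ((-m - 1).toNat) - 1 = m
    rw [h2, h1]
    push_cast
    ring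
  · intro m hm
    rintro ⟨i, rfl⟩
    have := p.antitone (Nat.zero_le i)
    push_cast at hm
    omega

/-- Lower finite subsets of ℕ are initial segments of length their cardinality. -/
lemma lower_mem_iff {S : Set ℕ} (hfin : S.Finite)
    (hlow : ∀ ⦃i j : ℕ⦄, i ∈ S → j ≤ i → j ∈ S) (i : ℕ) : i ∈ S ↔ i < S.ncard := by
  constructor
  · intro hi
    have hsub : Set.Iic i ⊆ S := fun j hj => hlow hi hj
    have h1 : (Set.Iic i).ncard ≤ S.ncard := Set.ncard_le_ncard hsub hfin
    have hIic : (Set.Iic i).ncard = i + 1 := by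
      rw [← Finset.coe_Iic, Set.ncard_coe_finset, Nat.card_Iic]
    omega
  · intro hi
    by_contra hc
    have hsub : S ⊆ Set.Iio i := fun j hj => by
      by_contra hj'
      simp only [Set.mem_Iio, not_lt] at hj'
      exact hc (hlow hj hj')
    have h1 : S.ncard ≤ (Set.Iio i).ncard := Set.ncard_le_ncard hsub (Set.finite_Iio i)
    have hIio : (Set.Iio i).ncard = i := by
      rw [← Finset.coe_range, Set.ncard_coe_finset, Finset.card_range]
    omega

/-- The Galois connection between a partition and its conjugate. -/
lemma conj_gt_iff (p : IntPartition) (i j : ℕ) : i < p.conj j ↔ j < p.parts i := by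
  have := lower_mem_iff (S := {i | j < p.parts i}) (p.conj_set_finite j)
    (fun a b ha hba => lt_of_lt_of_le ha (p.antitone hba)) i
  exact this.symm

lemma lt_durfee_iff (p : IntPartition) (i : ℕ) : i < p.durfee ↔ i < p.parts i := by
  have hfin : {i : ℕ | i < p.parts i}.Finite := by
    apply p.finite_support.subset
    intro i hi
    simp only [Set.mem_setOf_eq] at hi
    simp only [Function.mem_support]
    omega
  have hlow : ∀ ⦃a b : ℕ⦄, a ∈ {i : ℕ | i < p.parts i} → b ≤ a → b ∈ {i : ℕ | i < p.parts i} := by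
    intro a b ha hba
    simp only [Set.mem_setOf_eq] at ha ⊢
    have := p.antitone hba
    omega
  exact (lower_mem_iff hfin hlow i).symm

lemma conjugate_parts (p : IntPartition) (j : ℕ) : p.conjugate.parts j = p.conj j := rfl

lemma durfee_conjugate (p : IntPartition) : p.conjugate.durfee = p.durfee := by
  unfold IntPartition.durfee
  congr 1
  ext i
  simp only [Set.mem_setOf_eq, conjugate_parts]
  rw [conj_gt_iff]

/-- Totality: every integer is a `parts i - i` value or the reflection of a
`conj j - j` value. -/
lemma parts_or_conj (p : IntPartition) (m : ℤ) :
    (∃ i : ℕ, (p.parts i : ℤ) - i = m) ∨ (∃ j : ℕ, (p.conj j : ℤ) - j = 1 - m) := by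
  by_cases hm : (p.parts 0 : ℤ) < m
  · right
    refine ⟨(m - 1).toNat, ?_⟩
    have h1 : ((m - 1).toNat : ℤ) = m - 1 := Int.toNat_of_nonneg (by omega)
    have h2 : p.conj (m - 1).toNat = 0 := by
      by_contra hc
      have : 0 < p.conj (m - 1).toNat := Nat.pos_of_ne_zero hc
      rw [conj_gt_iff] at this
      have := p.antitone (Nat.zero_le 0)
      omega
    rw [h2, h1]
    push_cast
    ring
  · push_neg at hm
    obtain ⟨K, hK⟩ := supportBound p
    have hex : ∃ i : ℕ, (p.parts i : ℤ) - i ≤ m := by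
      refine ⟨K + (-m).toNat, ?_⟩
      rw [hK _ (by omega)]
      push_cast
      omega
    classical
    have hle : (p.parts (Nat.find hex) : ℤ) - (Nat.find hex) ≤ m := Nat.find_spec hex
    rcases eq_or_lt_of_le hle with heq | hlt
    · exact Or.inl ⟨_, heq⟩
    · right
      rcases Nat.eq_zero_or_pos (Nat.find hex) with h0 | hpos
      · rw [h0] at hlt
        push_cast at hlt
        omega
      · obtain ⟨i, hi1⟩ : ∃ i, Nat.find hex = i + 1 := ⟨Nat.find hex - 1, by omega⟩
        have hprev : ¬ ((p.parts i : ℤ) - i ≤ m) := Nat.find_min hex (by omega)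
        rw [hi1] at hlt
        push_neg at hprev
        -- parts i ≥ m + i + 1, parts (i+1) < m + i + 1
        have hmi : (0:ℤ) ≤ m + i := by
          have : (0:ℤ) ≤ p.parts (i+1) := by positivity
          push_cast at hlt
          omega
        refine ⟨(m + i).toNat, ?_⟩
        have hcast : ((m + i).toNat : ℤ) = m + i := Int.toNat_of_nonneg hmi
        have hconj : p.conj (m + i).toNat = i + 1 := by
          have hub : ¬ (i + 1 < p.conj (m + i).toNat) := by
            rw [conj_gt_iff]
            intro hc
            have : ((m+i).toNat : ℤ) < p.parts (i+1) := by exact_mod_cast hc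
            omega
          have hlb : i < p.conj (m + i).toNat := by
            rw [conj_gt_iff]
            have : (m + i : ℤ) < p.parts i := by omega
            omega
          omega
        rw [hconj, hcast]
        push_cast
        ring

/-- Disjointness: no integer is both a `parts i - i` value and `1 -` a `conj j - j` value. -/
lemma parts_conj_disjoint (p : IntPartition) (m : ℤ) (i j : ℕ)
    (hi : (p.parts i : ℤ) - i = m) (hj : (p.conj j : ℤ) - j = 1 - m) : False := by
  by_cases hc : j < p.parts i
  · have h1 : i < p.conj j := (conj_gt_iff p i j).2 hc
    have h2 : (j:ℤ) < p.parts i := by exact_mod_cast hc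
    have h3 : (i:ℤ) < p.conj j := by exact_mod_cast h1
    omega
  · push_neg at hc
    have h1 : ¬ (i < p.conj j) := by
      rw [conj_gt_iff]
      omega
    push_neg at h1
    have h2 : (p.parts i : ℤ) ≤ j := by exact_mod_cast hc
    have h3 : (p.conj j : ℤ) ≤ i := by exact_mod_cast h1
    omega

/-- The beta-set of the conjugate partition is the conjugate beta-set. -/
lemma Bp_conjugate (p : IntPartition) : Bp p.conjugate = conjS (Bp p) := by
  ext m
  rw [mem_Bp, mem_conjS, mem_Bp]
  constructor
  · rintro ⟨j, hj⟩
    rintro ⟨i, hi⟩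
    unfold beta at hi hj
    rw [conjugate_parts] at hj
    exact parts_conj_disjoint p (-m) i j (by omega) (by omega)
  · intro hm
    rcases parts_or_conj p (-m) with ⟨i, hi⟩ | ⟨j, hj⟩
    · exact absurd ⟨i, by unfold beta; omega⟩ hm
    · exact ⟨j, by unfold beta; rw [conjugate_parts]; omega⟩


/-! ### Charge and weight of partition beta-sets -/

lemma wsum_eq (Z : Set ℤ) :
    wsum Z = (∑ m ∈ posF Z, (m + 1)) + ∑ m ∈ negF Z, (-m - 1) := by
  rw [wsum, Ssum, charge, Finset.sum_add_distrib, Finset.sum_sub_distrib,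
    Finset.sum_const, Finset.sum_const, nsmul_eq_mul, nsmul_eq_mul, mul_one, mul_one,
    card_eq_sum_one, card_eq_sum_one]
  ring

lemma posF_Bp (p : IntPartition) :
    posF (Bp p) = (Finset.range p.durfee).image (beta p) := by
  ext m
  rw [mem_posF (hasB_Bp p), Finset.mem_image]
  constructor
  · rintro ⟨hm0, i, rfl⟩
    refine ⟨i, Finset.mem_range.2 ?_, rfl⟩
    rw [lt_durfee_iff]
    omega
  · rintro ⟨i, hi, rfl⟩
    rw [Finset.mem_range, lt_durfee_iff] at hi
    refine ⟨?_, ⟨i, rfl⟩⟩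
    simp only [beta]
    omega

lemma durfee_le_bound (p : IntPartition) {K : ℕ} (hK : ∀ i, K ≤ i → p.parts i = 0) :
    p.durfee ≤ K := by
  by_contra hc
  push_neg at hc
  have := (lt_durfee_iff p K).1 hc
  rw [hK K (le_refl K)] at this
  omega

lemma image_beta_subset (p : IntPartition) {K : ℕ} (hK : ∀ i, K ≤ i → p.parts i = 0) :
    (Finset.Ico p.durfee K).image (beta p) ⊆ Finset.Icc (-(K:ℤ)) (-1) := by
  intro m hm
  obtain ⟨i, hi, rfl⟩ := Finset.mem_image.1 hm
  rw [Finset.mem_Ico] at hi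
  rw [Finset.mem_Icc]
  have h1 : ¬ (i < p.parts i) := by rw [← lt_durfee_iff]; omega
  simp only [beta]
  push_neg at h1
  have : (p.parts i : ℤ) ≤ i := by exact_mod_cast h1
  have hiK : (i:ℤ) < K := by exact_mod_cast hi.2
  constructor <;> [omega; omega]

lemma negF_Bp (p : IntPartition) {K : ℕ} (hK : ∀ i, K ≤ i → p.parts i = 0) :
    negF (Bp p) =
      (Finset.Icc (-(K:ℤ)) (-1)) \ ((Finset.Ico p.durfee K).image (beta p)) := by
  have hDK := durfee_le_bound p hK
  ext m
  rw [mem_negF (hasB_Bp p), Finset.mem_sdiff, Finset.mem_Icc]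
  constructor
  · rintro ⟨hm0, hm⟩
    refine ⟨⟨?_, by omega⟩, ?_⟩
    · by_contra hc
      push_neg at hc
      refine hm ⟨(-m - 1).toNat, ?_⟩
      have h1 : ((-m - 1).toNat : ℤ) = -m - 1 := Int.toNat_of_nonneg (by omega)
      have h2 : p.parts (-m - 1).toNat = 0 := hK _ (by omega)
      show (p.parts ((-m - 1).toNat) : ℤ) - ((-m - 1).toNat) - 1 = m
      rw [h1, h2]
      push_cast
      ring
    · intro hc
      obtain ⟨i, _, rfl⟩ := Finset.mem_image.1 hc
      exact hm ⟨i, rfl⟩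
  · rintro ⟨⟨hm1, hm2⟩, hm3⟩
    refine ⟨by omega, ?_⟩
    rintro ⟨i, rfl⟩
    rcases lt_or_ge i p.durfee with hi | hi
    · rw [lt_durfee_iff] at hi
      omega
    · rcases lt_or_ge i K with hiK | hiK
      · exact hm3 (Finset.mem_image.2 ⟨i, Finset.mem_Ico.2 ⟨hi, hiK⟩, rfl⟩)
      · have h5 := hK i hiK
        rw [h5] at hm1
        push_cast at hm1
        omega

lemma charge_Bp (p : IntPartition) : charge (Bp p) = 0 := by
  obtain ⟨K, hK⟩ := supportBound p
  have hDK := durfee_le_bound p hK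
  have hinj : Function.Injective (beta p) := (beta_strictAnti p).injective
  have h1 : (posF (Bp p)).card = p.durfee := by
    rw [posF_Bp, Finset.card_image_of_injective _ hinj, Finset.card_range]
  have h2 : (negF (Bp p)).card = K - (K - p.durfee) := by
    rw [negF_Bp p hK, Finset.card_sdiff_of_subset (image_beta_subset p hK),
      Finset.card_image_of_injective _ hinj, Int.card_Icc, Nat.card_Ico]
    congr 1
    omega
  rw [charge, h1, h2]
  have : K - (K - p.durfee) = p.durfee := by omega
  rw [this]
  ring

lemma wsum_Bp (p : IntPartition) : wsum (Bp p) = (p.weight : ℤ) := by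
  obtain ⟨K, hK⟩ := supportBound p
  have hDK := durfee_le_bound p hK
  have hinj : ∀ a ∈ (Finset.range p.durfee), ∀ b ∈ (Finset.range p.durfee),
      beta p a = beta p b → a = b := fun a _ b _ hab => (beta_strictAnti p).injective hab
  have hinj2 : ∀ a ∈ (Finset.Ico p.durfee K), ∀ b ∈ (Finset.Ico p.durfee K),
      beta p a = beta p b → a = b := fun a _ b _ hab => (beta_strictAnti p).injective hab
  have e1 : (∑ m ∈ posF (Bp p), (m + 1)) =
      ∑ i ∈ Finset.range p.durfee, ((p.parts i : ℤ) - i) := by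
    rw [posF_Bp, Finset.sum_image hinj]
    exact Finset.sum_congr rfl fun i _ => by simp only [beta]; ring
  have e2 : (∑ m ∈ negF (Bp p), (-m - 1)) =
      (∑ m ∈ Finset.Icc (-(K:ℤ)) (-1), (-m - 1)) -
        ∑ i ∈ Finset.Ico p.durfee K, ((i:ℤ) - p.parts i) := by
    rw [negF_Bp p hK, Finset.sum_sdiff_eq_sub (image_beta_subset p hK),
      Finset.sum_image hinj2]
    congr 1
    exact Finset.sum_congr rfl fun i _ => by simp only [beta]; ring
  have e3 : (∑ m ∈ Finset.Icc (-(K:ℤ)) (-1), (-m - 1)) =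
      ∑ i ∈ Finset.range K, (i:ℤ) := by
    refine Finset.sum_nbij' (fun m => (-m - 1).toNat) (fun i => -(i:ℤ) - 1)
      ?_ ?_ ?_ ?_ ?_
    · intro m hm
      rw [Finset.mem_Icc] at hm
      rw [Finset.mem_range]
      omega
    · intro i hi
      rw [Finset.mem_range] at hi
      rw [Finset.mem_Icc]
      push_cast
      omega
    · intro m hm
      rw [Finset.mem_Icc] at hm
      omega
    · intro i hi
      rw [Finset.mem_range] at hi
      omega
    · intro m hm
      rw [Finset.mem_Icc] at hm
      omega
  have e4 : (p.weight : ℤ) = ∑ i ∈ Finset.range K, (p.parts i : ℤ) := by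
    rw [IntPartition.weight]
    rw [Finset.sum_subset (Finset.subset_iff.2 ?_) ?_]
    · push_cast
      rfl
    · intro i hi
      rw [Set.Finite.mem_toFinset, Function.mem_support] at hi
      rw [Finset.mem_range]
      by_contra hX
      exact hi (hK i (by omega))
    · intro i _ hi
      rw [Set.Finite.mem_toFinset, Function.mem_support, not_not] at hi
      exact hi
  have hsplit1 : ∑ i ∈ Finset.range K, (p.parts i : ℤ) =
      (∑ i ∈ Finset.range p.durfee, (p.parts i : ℤ)) +
        ∑ i ∈ Finset.Ico p.durfee K, (p.parts i : ℤ) := by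
    rw [Finset.range_eq_Ico, ← Finset.sum_Ico_consecutive _ (Nat.zero_le p.durfee) hDK,
      ← Finset.range_eq_Ico]
  have hsplit2 : ∑ i ∈ Finset.range K, (i : ℤ) =
      (∑ i ∈ Finset.range p.durfee, (i : ℤ)) + ∑ i ∈ Finset.Ico p.durfee K, (i : ℤ) := by
    rw [Finset.range_eq_Ico, ← Finset.sum_Ico_consecutive _ (Nat.zero_le p.durfee) hDK,
      ← Finset.range_eq_Ico]
  rw [wsum_eq, e1, e2, e3, e4, hsplit1, hsplit2]
  rw [Finset.sum_sub_distrib, Finset.sum_sub_distrib]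
  ring

/-! ### Injectivity -/

lemma strictAnti_eq_of_range {u v : ℕ → ℤ} (hu : StrictAnti u) (hv : StrictAnti v)
    (h : ∀ m, (∃ i, u i = m) ↔ (∃ i, v i = m)) : ∀ n, u n = v n := by
  intro n
  induction n using Nat.strong_induction_on with
  | _ n ih =>
    have h1 : u n ≤ v n := by
      obtain ⟨j, hj⟩ := (h (u n)).1 ⟨n, rfl⟩
      rcases lt_or_ge j n with hjn | hjn
      · exfalso
        have hj' := ih j hjn
        have : u n < u j := hu hjn
        omega
      · calc u n = v j := hj.symm
          _ ≤ v n := hv.antitone hjn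
    have h2 : v n ≤ u n := by
      obtain ⟨j, hj⟩ := (h (v n)).2 ⟨n, rfl⟩
      rcases lt_or_ge j n with hjn | hjn
      · exfalso
        have hj' := ih j hjn
        have : v n < v j := hv hjn
        omega
      · calc v n = u j := hj.symm
          _ ≤ u n := hu.antitone hjn
    omega

lemma strictAnti_eq_of_range_fin {u v : ℕ → ℤ} (hu : StrictAnti u) (hv : StrictAnti v)
    (D : ℕ) (h : ∀ m, (∃ i, i < D ∧ u i = m) ↔ (∃ i, i < D ∧ v i = m)) :
    ∀ n, n < D → u n = v n := by
  intro n
  induction n using Nat.strong_induction_on with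
  | _ n ih =>
    intro hnD
    have h1 : u n ≤ v n := by
      obtain ⟨j, hjD, hj⟩ := (h (u n)).1 ⟨n, hnD, rfl⟩
      rcases lt_or_ge j n with hjn | hjn
      · exfalso
        have hj' := ih j hjn (by omega)
        have : u n < u j := hu hjn
        omega
      · calc u n = v j := hj.symm
          _ ≤ v n := hv.antitone hjn
    have h2 : v n ≤ u n := by
      obtain ⟨j, hjD, hj⟩ := (h (v n)).2 ⟨n, hnD, rfl⟩
      rcases lt_or_ge j n with hjn | hjn
      · exfalso
        have hj' := ih j hjn (by omega)
        have : v n < v j := hv hjn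
        omega
      · calc v n = u j := hj.symm
          _ ≤ u n := hu.antitone hjn
    omega

lemma Bp_inj {p q : IntPartition} (h : Bp p = Bp q) : p = q := by
  have hb := strictAnti_eq_of_range (beta_strictAnti p) (beta_strictAnti q)
    (fun m => by rw [← mem_Bp, ← mem_Bp, h])
  have hparts : p.parts = q.parts := by
    funext i
    have := hb i
    simp only [beta] at this
    omega
  cases p
  cases q
  simp only [IntPartition.mk.injEq]
  exact hparts

/-! ### Construction of a partition from a beta-set -/

lemma exists_bseq {Z : Set ℤ} (h : HasB Z) :
    ∃ b : ℕ → ℤ, StrictAnti b ∧ (∀ n, b n ∈ Z) ∧ (∀ z ∈ Z, z ≤ b 0) ∧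
      (∀ n z, z ∈ Z → z < b n → z ≤ b (n + 1)) := by
  obtain ⟨N, h1, h2⟩ := h
  have hne : Z.Nonempty := ⟨-(N:ℤ) - 1, h1 _ (by omega)⟩
  have hbd : ∀ z ∈ Z, z ≤ N := fun z hz => by
    by_contra hc
    push_neg at hc
    exact h2 z (by omega) hz
  obtain ⟨g0, hg01, hg02⟩ := Int.exists_greatest_of_bdd ⟨(N:ℤ), hbd⟩ hne
  have hnext : ∀ x : ℤ, ∃ g, (g ∈ Z ∧ g < x) ∧ ∀ z, (z ∈ Z ∧ z < x) → z ≤ g := by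
    intro x
    refine Int.exists_greatest_of_bdd ⟨x, ?_⟩
      ⟨min (-(N:ℤ) - 1) (x - 1), h1 _ (by omega), by omega⟩
    rintro z ⟨_, hz⟩
    omega
  choose f hf1 hf2 using hnext
  refine ⟨fun n => Nat.rec g0 (fun _ prev => f prev) n, ?_, ?_, ?_, ?_⟩
  · apply strictAnti_nat_of_succ_lt
    intro n
    exact (hf1 _).2
  · intro n
    induction n with
    | zero => exact hg01
    | succ n _ => exact (hf1 _).1
  · intro z hz
    exact hg02 z hz
  · intro n z hz hzn
    exact hf2 _ z ⟨hz, hzn⟩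

lemma bseq_desc {b : ℕ → ℤ} (hb : StrictAnti b) : ∀ m d : ℕ, b (m + d) ≤ b m - d := by
  intro m d
  induction d with
  | zero => simp
  | succ d ih =>
    have : b (m + d + 1) < b (m + d) := hb (by omega)
    have heq : m + (d + 1) = (m + d) + 1 := by omega
    rw [heq]
    push_cast
    omega

lemma exists_part {Z : Set ℤ} (h : HasB Z) (hc : charge Z = 0) :
    ∃ p : IntPartition, Bp p = Z := by
  classical
  obtain ⟨b, hbanti, hbmem, hbtop, hbnext⟩ := exists_bseq h
  obtain ⟨N, h1, h2⟩ := h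
  -- range of b is Z
  have hrange : ∀ z, z ∈ Z ↔ ∃ n, b n = z := by
    intro z
    constructor
    · intro hz
      have hex : ∃ n : ℕ, b n ≤ z := by
        refine ⟨(b 0 - z).toNat, ?_⟩
        have := bseq_desc hbanti 0 ((b 0 - z).toNat)
        simp only [Nat.zero_add] at this
        have h3 : (b 0 - z) ≤ ((b 0 - z).toNat : ℤ) := Int.self_le_toNat _
        omega
      refine ⟨Nat.find hex, ?_⟩
      have hle : b (Nat.find hex) ≤ z := Nat.find_spec hex
      rcases Nat.eq_zero_or_pos (Nat.find hex) with h0 | hpos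
      · rw [h0]
        have := hbtop z hz
        rw [h0] at hle
        omega
      · obtain ⟨n, hn⟩ : ∃ n, Nat.find hex = n + 1 := ⟨Nat.find hex - 1, by omega⟩
        have hprev : ¬ (b n ≤ z) := Nat.find_min hex (by omega)
        push_neg at hprev
        have := hbnext n z hz hprev
        rw [hn] at hle
        rw [hn]
        omega
    · rintro ⟨n, rfl⟩
      exact hbmem n
  -- counting: low values of b
  have hcount : ∀ n : ℕ, b n ≤ -(N:ℤ) → b n = -(n:ℤ) - 1 := by
    intro n hbn
    have hinj : Function.Injective b := hbanti.injective
    have hF : ∀ z : ℤ, z ∈ (Finset.range (n+1)).image b ↔ (z ∈ Z ∧ b n ≤ z) := by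
      intro z
      rw [Finset.mem_image]
      constructor
      · rintro ⟨m, hm, rfl⟩
        rw [Finset.mem_range] at hm
        exact ⟨hbmem m, hbanti.antitone (by omega)⟩
      · rintro ⟨hz, hbz⟩
        obtain ⟨m, rfl⟩ := (hrange z).1 hz
        refine ⟨m, Finset.mem_range.2 ?_, rfl⟩
        by_contra hX
        push_neg at hX
        have : b m < b n := hbanti (by omega)
        omega
    have hN0 : b n ≤ -1 := by
      by_contra hx
      push_neg at hx
      exact h2 (b n) (by omega) (hbmem n)
    have hG : (Finset.range (n+1)).image b =
        ((Finset.Icc (b n) (-1)) \ negF Z) ∪ posF Z := by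
      ext z
      rw [hF, Finset.mem_union, Finset.mem_sdiff, Finset.mem_Icc, mem_negF ⟨N, h1, h2⟩,
        mem_posF ⟨N, h1, h2⟩]
      constructor
      · rintro ⟨hz, hbz⟩
        rcases lt_or_ge z 0 with hz0 | hz0
        · exact Or.inl ⟨⟨hbz, by omega⟩, by push_neg; intro _; exact hz⟩
        · exact Or.inr ⟨hz0, hz⟩
      · rintro (⟨⟨hz1, hz2⟩, hz3⟩ | ⟨hz1, hz2⟩)
        · push_neg at hz3
          exact ⟨hz3 (by omega), hz1⟩
        · exact ⟨hz2, by omega⟩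
    have hsub : negF Z ⊆ Finset.Icc (b n) (-1) := by
      intro z hz
      rw [mem_negF ⟨N, h1, h2⟩] at hz
      rw [Finset.mem_Icc]
      have : ¬ (z < -(N:ℤ)) := fun hX => hz.2 (h1 z hX)
      omega
    have hdisj : Disjoint ((Finset.Icc (b n) (-1)) \ negF Z) (posF Z) := by
      rw [Finset.disjoint_left]
      intro z hz hz'
      rw [Finset.mem_sdiff, Finset.mem_Icc] at hz
      rw [mem_posF ⟨N, h1, h2⟩] at hz'
      omega
    have hcard1 : ((Finset.range (n+1)).image b).card = n + 1 := by
      rw [Finset.card_image_of_injective _ hinj, Finset.card_range]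
    rw [hG, Finset.card_union_of_disjoint hdisj,
      Finset.card_sdiff_of_subset hsub, Int.card_Icc] at hcard1
    have hcc : (posF Z).card = (negF Z).card := by
      have := hc
      rw [charge] at this
      omega
    have hIcc : (-1 + 1 - b n).toNat = (-(b n)).toNat := by
      congr 1
      ring
    rw [hIcc] at hcard1
    have hcard2 : (negF Z).card ≤ (-(b n)).toNat := by
      calc (negF Z).card ≤ (Finset.Icc (b n) (-1)).card := Finset.card_le_card hsub
        _ = (-(b n)).toNat := by rw [Int.card_Icc, hIcc]
    omega
  -- lower bound for b
  have hlb : ∀ n : ℕ, -(n:ℤ) - 1 ≤ b n := by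
    intro n
    set d := (b 0 + N).toNat with hd
    have h3 : (b 0 + N) ≤ (d:ℤ) := Int.self_le_toNat _
    have h4 : b (n + d) ≤ -(N:ℤ) := by
      have := bseq_desc hbanti 0 (n + d)
      simp only [Nat.zero_add] at this
      push_cast at this ⊢
      omega
    have h5 := hcount (n + d) h4
    have h6 := bseq_desc hbanti n d
    rw [h5] at h6
    push_cast at h6 ⊢
    omega
  -- build the partition
  have hnn : ∀ n : ℕ, 0 ≤ b n + n + 1 := fun n => by have := hlb n; omega
  have hKbig : ∀ n : ℕ, (b 0 + N).toNat + 1 ≤ n → b n = -(n:ℤ) - 1 := by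
    intro n hn
    apply hcount
    have := bseq_desc hbanti 0 n
    simp only [Nat.zero_add] at this
    have h3 : (b 0 + N) ≤ ((b 0 + N).toNat : ℤ) := Int.self_le_toNat _
    push_cast at hn ⊢
    omega
  refine ⟨⟨fun n => (b n + n + 1).toNat, ?_, ?_⟩, ?_⟩
  · intro m k hmk
    have h3 := bseq_desc hbanti m (k - m)
    have h4 : m + (k - m) = k := by omega
    rw [h4] at h3
    apply Int.toNat_le_toNat
    push_cast
    omega
  · apply (Set.finite_Iio ((b 0 + N).toNat + 1)).subset
    intro n hn
    rw [Function.mem_support] at hn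
    rw [Set.mem_Iio]
    by_contra hX
    push_neg at hX
    have := hKbig n hX
    apply hn
    simp only [this]
    have : -(n:ℤ) - 1 + n + 1 = 0 := by ring
    rw [this]
    rfl
  · ext m
    rw [mem_Bp]
    simp only [beta]
    constructor
    · rintro ⟨i, hi⟩
      rw [hrange]
      refine ⟨i, ?_⟩
      have h3 : (((b i + i + 1).toNat : ℤ)) = b i + i + 1 := Int.toNat_of_nonneg (hnn i)
      rw [h3] at hi
      omega
    · intro hm
      obtain ⟨i, rfl⟩ := (hrange m).1 hm
      refine ⟨i, ?_⟩
      have h3 : (((b i + i + 1).toNat : ℤ)) = b i + i + 1 := Int.toNat_of_nonneg (hnn i)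
      rw [h3]
      ring

/-- A partition with the given beta-set (if admissible). -/
noncomputable def toPart (Z : Set ℤ) : IntPartition :=
  if h : HasB Z ∧ charge Z = 0 then Classical.choose (exists_part h.1 h.2)
  else ⟨fun _ => 0, fun _ _ _ => le_refl 0, by simp [Function.support]⟩

lemma Bp_toPart {Z : Set ℤ} (h : HasB Z) (hc : charge Z = 0) : Bp (toPart Z) = Z := by
  rw [toPart, dif_pos (⟨h, hc⟩ : HasB Z ∧ charge Z = 0)]
  exact Classical.choose_spec (exists_part h hc)


/-! ### Doubled distinct characterization -/

def DDset (Z : Set ℤ) : Prop := (0:ℤ) ∉ Z ∧ ∀ m : ℤ, m ≠ 0 → (m ∈ Z ↔ -m ∉ Z)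

lemma beta_nonneg_iff (p : IntPartition) (i : ℕ) : 0 ≤ beta p i ↔ i < p.durfee := by
  rw [lt_durfee_iff]
  simp only [beta]
  omega

lemma mem_Bp_nonneg {p : IntPartition} {m : ℤ} (hm : 0 ≤ m) :
    m ∈ Bp p ↔ ∃ i, i < p.durfee ∧ beta p i = m := by
  rw [mem_Bp]
  constructor
  · rintro ⟨i, rfl⟩
    exact ⟨i, (beta_nonneg_iff p i).1 hm, rfl⟩
  · rintro ⟨i, _, rfl⟩
    exact ⟨i, rfl⟩

lemma neg_notmem_iff (p : IntPartition) (m : ℤ) :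
    -m ∉ Bp p ↔ (m - 1) ∈ Bp p.conjugate := by
  rw [Bp_conjugate, mem_conjS, show -1 - (m - 1) = -m from by ring]

lemma beta_conjugate (p : IntPartition) (i : ℕ) :
    beta p.conjugate i = (p.conj i : ℤ) - i - 1 := rfl

lemma isDD_iff (p : IntPartition) : p.IsDoubledDistinct ↔ DDset (Bp p) := by
  have hD : p.conjugate.durfee = p.durfee := durfee_conjugate p
  constructor
  · intro hdd
    have hH : ∀ i, i < p.durfee → beta p i = beta p.conjugate i + 1 := by
      intro i hi
      have := hdd i hi
      simp only [beta, beta_conjugate, conjugate_parts, this]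
      push_cast
      ring
    have h0 : (0:ℤ) ∉ Bp p := by
      intro hc
      obtain ⟨i, hi, hbi⟩ := (mem_Bp_nonneg (le_refl 0)).1 hc
      have h1 := hH i hi
      have h2 : 0 ≤ beta p.conjugate i := (beta_nonneg_iff p.conjugate i).2 (by omega)
      omega
    have hclaim : ∀ m : ℤ, 1 ≤ m → (m ∈ Bp p ↔ -m ∉ Bp p) := by
      intro m hm
      rw [neg_notmem_iff, mem_Bp_nonneg (by omega : (0:ℤ) ≤ m),
        mem_Bp_nonneg (by omega : (0:ℤ) ≤ m - 1), hD]
      constructor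
      · rintro ⟨i, hi, hbi⟩
        exact ⟨i, hi, by have := hH i hi; omega⟩
      · rintro ⟨i, hi, hbi⟩
        exact ⟨i, hi, by have := hH i hi; omega⟩
    refine ⟨h0, fun m hm => ?_⟩
    rcases lt_or_gt_of_ne hm with hneg | hpos
    · have := hclaim (-m) (by omega)
      rw [neg_neg] at this
      constructor
      · intro h1 hc
        exact (this.1 hc) h1
      · intro h1
        by_contra h2
        exact h1 (this.2 h2)
    · exact hclaim m (by omega)
  · rintro ⟨h0, hsym⟩
    intro i hiD
    have hv : StrictAnti (fun i => beta p.conjugate i + 1) :=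
      fun a b hab => by dsimp only; have := beta_strictAnti p.conjugate hab; omega
    have himg : ∀ m : ℤ, (∃ i, i < p.durfee ∧ beta p i = m) ↔
        (∃ i, i < p.durfee ∧ beta p.conjugate i + 1 = m) := by
      intro m
      rcases le_or_gt m 0 with hm | hm
      · constructor
        · rintro ⟨i, hi, rfl⟩
          exfalso
          have h2 : 0 ≤ beta p i := (beta_nonneg_iff p i).2 hi
          rcases eq_or_lt_of_le h2 with he | hl
          · exact h0 (by rw [he]; exact ⟨i, rfl⟩)
          · omega
        · rintro ⟨i, hi, hbi⟩
          exfalso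
          have h2 : 0 ≤ beta p.conjugate i := (beta_nonneg_iff p.conjugate i).2 (by omega)
          omega
      · have e1 : m ∈ Bp p ↔ -m ∉ Bp p := hsym m (by omega)
        have e2 := (mem_Bp_nonneg (by omega : (0:ℤ) ≤ m) (p := p))
        have e3 := (mem_Bp_nonneg (by omega : (0:ℤ) ≤ m - 1) (p := p.conjugate))
        rw [← e2, e1, neg_notmem_iff, e3, hD]
        constructor
        · rintro ⟨j, hj, hbj⟩
          exact ⟨j, hj, by omega⟩
        · rintro ⟨j, hj, hbj⟩
          exact ⟨j, hj, by omega⟩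
    have := strictAnti_eq_of_range_fin (beta_strictAnti p) hv p.durfee
      (by intro m; exact himg m) i hiD
    simp only [beta, beta_conjugate, conjugate_parts] at this
    omega

/-! ### Hooks and beta-sets -/

lemma hook_cell {p : IntPartition} {i j : ℕ} (hij : j < p.parts i) :
    (p.hook i j : ℤ) = beta p i - ((j:ℤ) - p.conj j) ∧
      ((j:ℤ) - p.conj j) ∉ Bp p ∧ ((j:ℤ) - p.conj j) < beta p i := by
  have hconj : i < p.conj j := (conj_gt_iff p i j).2 hij
  have h1 : (p.hook i j : ℤ) = beta p i - ((j:ℤ) - p.conj j) := by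
    show ((p.parts i + p.conj j - i - j - 1 : ℕ) : ℤ) =
      ((p.parts i : ℤ) - i - 1) - ((j:ℤ) - p.conj j)
    have hc1 : (i:ℤ) < p.conj j := by exact_mod_cast hconj
    have hc2 : (j:ℤ) < p.parts i := by exact_mod_cast hij
    omega
  refine ⟨h1, ?_, ?_⟩
  · rintro ⟨i', hi'⟩
    refine parts_conj_disjoint p ((p.parts i' : ℤ) - i') i' j rfl ?_
    omega
  · have hc1 : (i:ℤ) < p.conj j := by exact_mod_cast hconj
    have hc2 : (j:ℤ) < p.parts i := by exact_mod_cast hij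
    simp only [beta]
    omega

lemma hook_exists {p : IntPartition} {i : ℕ} {m : ℤ} (hm : m ∉ Bp p) (hlt : m < beta p i) :
    ∃ j : ℕ, j < p.parts i ∧ (p.hook i j : ℤ) = beta p i - m := by
  have hmem : (-1 - m) ∈ Bp p.conjugate := by
    rw [Bp_conjugate, mem_conjS, show -1 - (-1 - m) = m from by ring]
    exact hm
  obtain ⟨j, hj⟩ := hmem
  rw [conjugate_parts] at hj
  have hjm : (j:ℤ) - p.conj j = m := by omega
  have hjlt : j < p.parts i := by
    by_contra hc
    push_neg at hc
    have h1 : ¬ (i < p.conj j) := by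
      rw [conj_gt_iff]
      omega
    push_neg at h1
    have hc1 : (p.conj j:ℤ) ≤ i := by exact_mod_cast h1
    have hc2 : (p.parts i:ℤ) ≤ j := by exact_mod_cast hc
    simp only [beta] at hlt
    omega
  obtain ⟨h1, _, _⟩ := hook_cell hjlt
  exact ⟨j, hjlt, by rw [h1, hjm]⟩

lemma mem_hooks_iff {p : IntPartition} {h : ℕ} :
    h ∈ p.hooks ↔ ∃ c : ℕ × ℕ, c.2 < p.parts c.1 ∧ p.hook c.1 c.2 = h := by
  rw [IntPartition.hooks, Multiset.mem_map]
  constructor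
  · rintro ⟨c, hc, rfl⟩
    rw [← Finset.mem_def, IntPartition.cellsFinset, Set.Finite.mem_toFinset] at hc
    exact ⟨c, hc, rfl⟩
  · rintro ⟨c, hc, rfl⟩
    refine ⟨c, ?_, rfl⟩
    rw [← Finset.mem_def, IntPartition.cellsFinset, Set.Finite.mem_toFinset]
    exact hc

lemma isCore_iff (p : IntPartition) (t : ℕ) :
    p.IsCore t ↔ ∀ b ∈ Bp p, ∀ m : ℤ, m ∉ Bp p → m < b → ¬ ((t:ℤ) ∣ (b - m)) := by
  constructor
  · intro hcore b hb m hm hlt hdvd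
    obtain ⟨i, rfl⟩ := hb
    obtain ⟨j, hj1, hj2⟩ := hook_exists hm hlt
    refine hcore (p.hook i j) (mem_hooks_iff.2 ⟨(i, j), hj1, rfl⟩) ?_
    have : (t:ℤ) ∣ (p.hook i j : ℤ) := by rw [hj2]; exact hdvd
    exact_mod_cast this
  · intro h hk hmem hdvd
    obtain ⟨c, hc, rfl⟩ := mem_hooks_iff.1 hmem
    obtain ⟨h1, h2, h3⟩ := hook_cell hc
    refine h (beta p c.1) ⟨c.1, rfl⟩ _ h2 h3 ?_
    rw [← h1]
    exact_mod_cast hdvd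


/-! ### The Littlewood decomposition at the level of beta-sets -/

noncomputable def ck (t : ℕ) (Z : Set ℤ) (k : ℕ) : ℤ := charge (resSet t k Z)

noncomputable def quotS (t : ℕ) (Z : Set ℤ) (k : ℕ) : Set ℤ :=
  shiftI (ck t Z k) (resSet t k Z)

noncomputable def coreS (t : ℕ) (Z : Set ℤ) : Set ℤ :=
  {m : ℤ | m / (t:ℤ) < ck t Z (m % (t:ℤ)).toNat}

lemma mem_coreS_canon {t : ℕ} (ht : 0 < t) {k : ℕ} (hk : k < t) (Z : Set ℤ) (j : ℤ) :
    ((t:ℤ) * j + k ∈ coreS t Z) ↔ j < ck t Z k := by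
  obtain ⟨hd, he⟩ := res_div ht hk j
  show ((t:ℤ)*j+k) / t < ck t Z (((t:ℤ)*j+k) % t).toNat ↔ _
  rw [hd, he, Int.toNat_natCast]

lemma canon_decomp {t : ℕ} (ht : 0 < t) (m : ℤ) :
    m = (t:ℤ) * (m / t) + ((m % t).toNat : ℤ) ∧ (m % t).toNat < t := by
  obtain ⟨h1, h2⟩ := emod_bounds ht m
  have h3 := self_div ht m
  constructor
  · omega
  · omega

lemma res_coreS {t : ℕ} (ht : 0 < t) {k : ℕ} (hk : k < t) (Z : Set ℤ) :
    resSet t k (coreS t Z) = Set.Iio (ck t Z k) := by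
  ext j
  rw [mem_resSet, mem_coreS_canon ht hk, Set.mem_Iio]

lemma set_ext_of_res {t : ℕ} (ht : 0 < t) {A B : Set ℤ}
    (h : ∀ k, k < t → resSet t k A = resSet t k B) : A = B := by
  ext m
  obtain ⟨h1, h2⟩ := canon_decomp ht m
  constructor
  · intro hm
    have h3 : m / (t:ℤ) ∈ resSet t (m % (t:ℤ)).toNat A := by
      rw [mem_resSet, ← h1]; exact hm
    rw [h _ h2] at h3
    rw [mem_resSet, ← h1] at h3
    exact h3
  · intro hm
    have h3 : m / (t:ℤ) ∈ resSet t (m % (t:ℤ)).toNat B := by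
      rw [mem_resSet, ← h1]; exact hm
    rw [← h _ h2] at h3
    rw [mem_resSet, ← h1] at h3
    exact h3

lemma mul_lt_cancel {t : ℕ} (ht : 0 < t) {a b : ℤ} (h : (t:ℤ) * a < (t:ℤ) * b) : a < b := by
  have ht' : (0:ℤ) < t := by exact_mod_cast ht
  exact lt_of_mul_lt_mul_left h (le_of_lt ht')

lemma hasB_coreS {t : ℕ} (ht : 0 < t) (Z : Set ℤ) : HasB (coreS t Z) := by
  set B := (Finset.range t).sup (fun k => (ck t Z k).natAbs) with hB
  have hBk : ∀ k, k < t → (ck t Z k).natAbs ≤ B :=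
    fun k hk => Finset.le_sup (f := fun k => (ck t Z k).natAbs) (Finset.mem_range.2 hk)
  have ht' : (0:ℤ) < t := by exact_mod_cast ht
  refine ⟨t * (B + 1), ?_, ?_⟩
  · intro m hm
    obtain ⟨h1, h2⟩ := canon_decomp ht m
    rw [h1, mem_coreS_canon ht h2]
    have hb := hBk _ h2
    have hcast : ((t * (B+1) : ℕ) : ℤ) = (t:ℤ) * (B+1) := by push_cast; ring
    have hjlt : m / (t:ℤ) < -((B:ℤ)+1) := by
      apply mul_lt_cancel ht
      have hk0 : (0:ℤ) ≤ ((m % t).toNat : ℤ) := by positivity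
      have : (t:ℤ) * (-((B:ℤ)+1)) = -((t:ℤ) * ((B:ℤ)+1)) := by ring
      omega
    omega
  · intro m hm
    obtain ⟨h1, h2⟩ := canon_decomp ht m
    rw [h1, mem_coreS_canon ht h2]
    have hb := hBk _ h2
    have hcast : ((t * (B+1) : ℕ) : ℤ) = (t:ℤ) * (B+1) := by push_cast; ring
    have hjgt : (B:ℤ) < m / (t:ℤ) := by
      apply mul_lt_cancel ht
      have hkt : ((m % t).toNat : ℤ) < t := by exact_mod_cast h2
      have : (t:ℤ) * ((B:ℤ)+1) = (t:ℤ) * (B:ℤ) + t := by ring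
      omega
    omega

lemma hasB_quotS {t : ℕ} (ht : 0 < t) {Z : Set ℤ} (h : HasB Z) (k : ℕ) :
    HasB (quotS t Z k) := hasB_shiftI (hasB_resSet h t k ht) _

lemma charge_quotS {t : ℕ} (ht : 0 < t) {Z : Set ℤ} (h : HasB Z) (k : ℕ) :
    charge (quotS t Z k) = 0 := by
  rw [quotS, charge_shiftI (hasB_resSet h t k ht), ck]
  ring

lemma charge_coreS {t : ℕ} (ht : 0 < t) {Z : Set ℤ} (h : HasB Z) :
    charge (coreS t Z) = charge Z := by
  rw [charge_decomp ht (hasB_coreS ht Z), charge_decomp ht h]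
  refine Finset.sum_congr rfl fun k hk => ?_
  rw [res_coreS ht (Finset.mem_range.1 hk), charge_Iio, ck]

/-! ### Weight identity at beta-set level -/

lemma wsum_split {t : ℕ} (ht : 0 < t) {Z : Set ℤ} (h : HasB Z) :
    2 * wsum Z = 2 * wsum (coreS t Z) +
      2 * (t:ℤ) * ∑ k ∈ Finset.range t, wsum (quotS t Z k) := by
  have e1 := wsum_decomp ht h
  have e2 := wsum_decomp ht (hasB_coreS ht Z)
  have e3 : ∀ k, k < t → 2 * Ssum (resSet t k Z) =
      2 * Ssum (quotS t Z k) + (ck t Z k) * (ck t Z k - 1) :=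
    fun k hk => Ssum_shiftI (hasB_resSet h t k ht) _ rfl
  have e4 : ∀ k, k < t → wsum (quotS t Z k) = Ssum (quotS t Z k) := by
    intro k hk
    rw [wsum, charge_quotS ht h k, add_zero]
  rw [e1, e2, Finset.mul_sum, Finset.mul_sum, Finset.mul_sum, ← Finset.sum_add_distrib]
  refine Finset.sum_congr rfl fun k hk => ?_
  have hk' := Finset.mem_range.1 hk
  rw [res_coreS ht hk', charge_Iio, e4 k hk']
  have e5 := Ssum_Iio (ck t Z k)
  have e6 := e3 k hk'
  have e7 : charge (resSet t k Z) = ck t Z k := rfl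
  linear_combination (t:ℤ) * e6 - (t:ℤ) * e5 + 2*((k:ℤ)+1) * e7

/-! ### Symmetry (doubled distinct) transfer -/

lemma charge_DDset {Y : Set ℤ} (h : HasB Y) (hd : DDset Y) : charge Y = 0 := by
  have him : posF Y = (negF Y).image (fun m => -m) := by
    ext m
    rw [mem_posF h, Finset.mem_image]
    constructor
    · rintro ⟨hm0, hm⟩
      have hne : m ≠ 0 := fun hc => hd.1 (hc ▸ hm)
      refine ⟨-m, ?_, by ring⟩
      rw [mem_negF h]
      exact ⟨by omega, ((hd.2 m hne).1 hm)⟩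
    · rintro ⟨x, hx, rfl⟩
      rw [mem_negF h] at hx
      have hne : -x ≠ 0 := by omega
      refine ⟨by omega, ?_⟩
      by_contra hc
      have := (hd.2 (-x) hne)
      rw [neg_neg] at this
      exact hc (this.2 hx.2)
  rw [charge, him, Finset.card_image_of_injective _ (fun a b hab => by
    simpa using hab : Function.Injective (fun m : ℤ => -m))]
  ring

lemma ddset_res0 {t : ℕ} (ht : 0 < t) {Z : Set ℤ} (hd : DDset Z) :
    DDset (resSet t 0 Z) := by
  have ht' : (0:ℤ) < t := by exact_mod_cast ht
  constructor
  · intro hc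
    rw [mem_resSet] at hc
    simp only [mul_zero, Nat.cast_zero, add_zero] at hc
    exact hd.1 hc
  · intro j hj
    rw [mem_resSet, mem_resSet]
    have h1 : ((t:ℤ) * j + ((0:ℕ):ℤ)) = (t:ℤ)*j := by push_cast; ring
    have h2 : ((t:ℤ) * (-j) + ((0:ℕ):ℤ)) = -((t:ℤ)*j) := by push_cast; ring
    rw [h1, h2]
    exact hd.2 _ (mul_ne_zero (by positivity) hj)

lemma res_reflect {t k : ℕ} (ht : 0 < t) (hk0 : 0 < k) (hkt : k < t) {Z : Set ℤ}
    (hd : DDset Z) : resSet t (t - k) Z = conjS (resSet t k Z) := by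
  ext j
  rw [mem_resSet, mem_conjS, mem_resSet]
  have hcast : ((t - k : ℕ) : ℤ) = (t:ℤ) - k := by
    have : k ≤ t := le_of_lt hkt
    push_cast [this]
    ring
  have hkc : (0:ℤ) < k := by exact_mod_cast hk0
  have hkc2 : (k:ℤ) < t := by exact_mod_cast hkt
  have hne : (t:ℤ) * j + (t - k : ℕ) ≠ 0 := by
    rw [hcast]
    intro hc
    have h1 : (t:ℤ) * (j + 1) = k := by linarith
    rcases le_or_gt (j + 1) 0 with hj | hj
    · have : (t:ℤ) * (j+1) ≤ (t:ℤ) * 0 := by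
        apply mul_le_mul_of_nonneg_left hj (by positivity)
      omega
    · have : (t:ℤ) * 1 ≤ (t:ℤ) * (j+1) := by
        apply mul_le_mul_of_nonneg_left (by omega) (by positivity)
      omega
  rw [hd.2 _ hne, hcast]
  have heq : -((t:ℤ) * j + ((t:ℤ) - k)) = (t:ℤ) * (-1 - j) + k := by ring
  rw [heq]

lemma ck_reflect {t k : ℕ} (ht : 0 < t) (hk0 : 0 < k) (hkt : k < t) {Z : Set ℤ}
    (h : HasB Z) (hd : DDset Z) : ck t Z (t - k) = -(ck t Z k) := by
  rw [ck, ck, res_reflect ht hk0 hkt hd, charge_conjS (hasB_resSet h t k ht)]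

lemma ck_zero {t : ℕ} (ht : 0 < t) {Z : Set ℤ} (h : HasB Z) (hd : DDset Z) :
    ck t Z 0 = 0 :=
  charge_DDset (hasB_resSet h t 0 ht) (ddset_res0 ht hd)

lemma quotS_reflect {t k : ℕ} (ht : 0 < t) (hk0 : 0 < k) (hkt : k < t) {Z : Set ℤ}
    (h : HasB Z) (hd : DDset Z) : quotS t Z (t - k) = conjS (quotS t Z k) := by
  rw [quotS, quotS, res_reflect ht hk0 hkt hd, ck_reflect ht hk0 hkt h hd,
    conjS_shiftI]

lemma quotS_zero_eq {t : ℕ} (ht : 0 < t) {Z : Set ℤ} (h : HasB Z) (hd : DDset Z) :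
    quotS t Z 0 = resSet t 0 Z := by
  rw [quotS, ck_zero ht h hd, shiftI_zero]

lemma ddset_coreS {t : ℕ} (ht : 0 < t) {Z : Set ℤ} (h : HasB Z) (hd : DDset Z) :
    DDset (coreS t Z) := by
  have hc0 := ck_zero ht h hd
  constructor
  · have h0 : (0:ℤ) = (t:ℤ) * 0 + (0:ℕ) := by simp
    rw [h0, mem_coreS_canon ht ht Z 0, hc0]
    omega
  · intro m hm
    obtain ⟨h1, h2⟩ := canon_decomp ht m
    set k := (m % (t:ℤ)).toNat with hkdef
    set j := m / (t:ℤ) with hjdef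
    rcases Nat.eq_zero_or_pos k with hk0 | hk0
    · -- k = 0, so m = t*j with j ≠ 0
      rw [hk0] at h1
      simp only [Nat.cast_zero, add_zero] at h1
      have hj0 : j ≠ 0 := by
        intro hc
        rw [hc, mul_zero] at h1
        exact hm h1
      have e1 : m ∈ coreS t Z ↔ j < 0 := by
        rw [h1, show (t:ℤ) * j = (t:ℤ) * j + ((0:ℕ):ℤ) from by simp,
          mem_coreS_canon ht ht, hc0]
      have e2 : -m ∈ coreS t Z ↔ -j < 0 := by
        rw [h1, show -((t:ℤ) * j) = (t:ℤ) * (-j) + ((0:ℕ):ℤ) from by push_cast; ring,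
          mem_coreS_canon ht ht, hc0]
      rw [e1, e2]
      omega
    · -- 0 < k < t
      have e1 : m ∈ coreS t Z ↔ j < ck t Z k := by
        rw [h1, mem_coreS_canon ht h2]
      have e2 : -m ∈ coreS t Z ↔ -j - 1 < -(ck t Z k) := by
        have hcast : ((t - k : ℕ) : ℤ) = (t:ℤ) - k := by push_cast [le_of_lt h2]; ring
        have heq : -m = (t:ℤ) * (-j - 1) + ((t - k : ℕ) : ℤ) := by
          rw [hcast, h1]
          push_cast
          ring
        rw [heq, mem_coreS_canon ht (by omega : t - k < t),
          ck_reflect ht hk0 h2 h hd]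
      rw [e1, e2]
      omega


/-! ### Flushedness of cores, and reconstruction -/

lemma lower_int_eq_Iio {S : Set ℤ} (h : HasB S)
    (hlow : ∀ j1 j2 : ℤ, j1 ≤ j2 → j2 ∈ S → j1 ∈ S) : S = Set.Iio (charge S) := by
  obtain ⟨N, h1, h2⟩ := h
  have hbd : ∃ b : ℤ, ∀ z : ℤ, z ∉ S → b ≤ z := by
    refine ⟨-(N:ℤ), fun z hz => ?_⟩
    by_contra hc
    push_neg at hc
    exact hz (h1 z hc)
  obtain ⟨e, he1, he2⟩ := Int.exists_least_of_bdd hbd ⟨(N:ℤ), h2 _ (le_refl _)⟩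
  have hS : S = Set.Iio e := by
    ext x
    rw [Set.mem_Iio]
    constructor
    · intro hx
      by_contra hc
      push_neg at hc
      exact he1 (hlow e x hc hx)
    · intro hx
      by_contra hc
      have := he2 x hc
      omega
  rw [hS, charge_Iio]

lemma res_flush {t k : ℕ} (ht : 0 < t) (hk : k < t) {p : IntPartition}
    (hcore : p.IsCore t) :
    resSet t k (Bp p) = Set.Iio (ck t (Bp p) k) := by
  apply lower_int_eq_Iio (hasB_resSet (hasB_Bp p) t k ht)
  intro j1 j2 hle hj2
  by_contra hj1
  have hne : j1 < j2 := lt_of_le_of_ne hle (fun hc => hj1 (hc ▸ hj2))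
  refine (isCore_iff p t).1 hcore _ hj2 _ hj1 ?_ ?_
  · have ht' : (0:ℤ) < t := by exact_mod_cast ht
    have : (t:ℤ) * j1 < (t:ℤ) * j2 := by
      apply mul_lt_mul_of_pos_left hne ht'
    omega
  · exact ⟨j2 - j1, by ring⟩

lemma hasB_of_res {t : ℕ} (ht : 0 < t) {Z : Set ℤ}
    (h : ∀ k, k < t → HasB (resSet t k Z)) : HasB Z := by
  have h' : ∀ k : ℕ, ∃ N, k < t → Bnd (resSet t k Z) N := by
    intro k
    by_cases hk : k < t
    · obtain ⟨N, hN⟩ := h k hk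
      exact ⟨N, fun _ => hN⟩
    · exact ⟨0, fun hc => absurd hc hk⟩
  choose f hf using h'
  set B := (Finset.range t).sup f with hB
  have ht' : (0:ℤ) < t := by exact_mod_cast ht
  refine ⟨t * (B + 1), ?_, ?_⟩
  · intro m hm
    obtain ⟨h1, h2⟩ := canon_decomp ht m
    have hBk : f (m % (t:ℤ)).toNat ≤ B := Finset.le_sup (f := f) (Finset.mem_range.2 h2)
    have hbnd := hf _ h2
    have hcast : ((t * (B+1) : ℕ) : ℤ) = (t:ℤ) * ((B:ℤ)+1) := by push_cast; ring
    have hjlt : m / (t:ℤ) < -((B:ℤ)+1) := by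
      apply mul_lt_cancel ht
      have hk0 : (0:ℤ) ≤ ((m % (t:ℤ)).toNat : ℤ) := by positivity
      have he : (t:ℤ) * (-((B:ℤ)+1)) = -((t:ℤ) * ((B:ℤ)+1)) := by ring
      omega
    have hmem : m / (t:ℤ) ∈ resSet t (m % (t:ℤ)).toNat Z := by
      apply hbnd.1
      have : ((f (m % (t:ℤ)).toNat : ℕ) : ℤ) ≤ (B:ℤ) := by exact_mod_cast hBk
      omega
    rw [mem_resSet, ← h1] at hmem
    exact hmem
  · intro m hm hmZ
    obtain ⟨h1, h2⟩ := canon_decomp ht m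
    have hBk : f (m % (t:ℤ)).toNat ≤ B := Finset.le_sup (f := f) (Finset.mem_range.2 h2)
    have hbnd := hf _ h2
    have hcast : ((t * (B+1) : ℕ) : ℤ) = (t:ℤ) * ((B:ℤ)+1) := by push_cast; ring
    have hjgt : (B:ℤ) < m / (t:ℤ) := by
      apply mul_lt_cancel ht
      have hkt : ((m % (t:ℤ)).toNat : ℤ) < t := by exact_mod_cast h2
      have he : (t:ℤ) * ((B:ℤ)+1) = (t:ℤ) * (B:ℤ) + t := by ring
      omega
    have hmem : m / (t:ℤ) ∈ resSet t (m % (t:ℤ)).toNat Z := by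
      rw [mem_resSet, ← h1]
      exact hmZ
    refine hbnd.2 (m / (t:ℤ)) ?_ hmem
    have : ((f (m % (t:ℤ)).toNat : ℕ) : ℤ) ≤ (B:ℤ) := by exact_mod_cast hBk
    omega

/-! ### The forward and inverse maps -/

lemma zeroPos_iff {p : IntPartition} {m : ℤ} : zeroPos p m ↔ m ∈ Bp p := Iff.rfl

noncomputable def fwdCore (t : ℕ) (p : IntPartition) : IntPartition := toPart (coreS t (Bp p))

noncomputable def fwdQuot (t : ℕ) (p : IntPartition) (k : ℕ) : IntPartition :=
  toPart (quotS t (Bp p) k)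

lemma Bp_fwdCore {t : ℕ} (ht : 0 < t) (p : IntPartition) :
    Bp (fwdCore t p) = coreS t (Bp p) :=
  Bp_toPart (hasB_coreS ht _) (by rw [charge_coreS ht (hasB_Bp p), charge_Bp])

lemma Bp_fwdQuot {t : ℕ} (ht : 0 < t) (p : IntPartition) (k : ℕ) :
    Bp (fwdQuot t p k) = quotS t (Bp p) k :=
  Bp_toPart (hasB_quotS ht (hasB_Bp p) k) (charge_quotS ht (hasB_Bp p) k)

noncomputable def invS (t : ℕ) (core : IntPartition) (qq : ℕ → IntPartition) : Set ℤ :=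
  {m : ℤ | m / (t:ℤ) - ck t (Bp core) (m % (t:ℤ)).toNat ∈ Bp (qq (m % (t:ℤ)).toNat)}

lemma mem_invS_canon {t : ℕ} (ht : 0 < t) {k : ℕ} (hk : k < t) (core : IntPartition)
    (qq : ℕ → IntPartition) (j : ℤ) :
    ((t:ℤ) * j + k ∈ invS t core qq) ↔ j - ck t (Bp core) k ∈ Bp (qq k) := by
  obtain ⟨hd, he⟩ := res_div ht hk j
  simp only [invS, Set.mem_setOf_eq, hd, he, Int.toNat_natCast]

lemma res_invS {t : ℕ} (ht : 0 < t) {k : ℕ} (hk : k < t) (core : IntPartition)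
    (qq : ℕ → IntPartition) :
    resSet t k (invS t core qq) =
      shiftI (-(ck t (Bp core) k)) (Bp (qq k)) := by
  ext j
  rw [mem_resSet, mem_invS_canon ht hk, mem_shiftI, sub_eq_add_neg]

lemma hasB_invS {t : ℕ} (ht : 0 < t) (core : IntPartition) (qq : ℕ → IntPartition) :
    HasB (invS t core qq) := by
  apply hasB_of_res ht
  intro k hk
  rw [res_invS ht hk]
  exact hasB_shiftI (hasB_Bp _) _

lemma charge_invS {t : ℕ} (ht : 0 < t) (core : IntPartition) (qq : ℕ → IntPartition) :
    charge (invS t core qq) = 0 := by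
  rw [charge_decomp ht (hasB_invS ht core qq)]
  have e1 : ∀ k ∈ Finset.range t, charge (resSet t k (invS t core qq)) =
      charge (resSet t k (Bp core)) := by
    intro k hk
    rw [res_invS ht (Finset.mem_range.1 hk), charge_shiftI (hasB_Bp _), charge_Bp, ck]
    ring
  rw [Finset.sum_congr rfl e1, ← charge_decomp ht (hasB_Bp core), charge_Bp]

noncomputable def invPart (t : ℕ) (core : IntPartition) (qq : ℕ → IntPartition) : IntPartition :=
  toPart (invS t core qq)

lemma Bp_invPart {t : ℕ} (ht : 0 < t) (core : IntPartition) (qq : ℕ → IntPartition) :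
    Bp (invPart t core qq) = invS t core qq :=
  Bp_toPart (hasB_invS ht core qq) (charge_invS ht core qq)

/-! ### DDset of the reconstructed set -/

lemma ddset_invS {t : ℕ} (ht : 0 < t) (core : IntPartition) (qq : ℕ → IntPartition)
    (hcoreDD : DDset (Bp core))
    (hq0 : DDset (Bp (qq 0)))
    (hconjq : ∀ k, 0 < k → k < t → Bp (qq (t - k)) = conjS (Bp (qq k))) :
    DDset (invS t core qq) := by
  have hc0 : ck t (Bp core) 0 = 0 := ck_zero ht (hasB_Bp core) hcoreDD
  constructor
  · have h0 : (0:ℤ) = (t:ℤ) * 0 + ((0:ℕ):ℤ) := by simp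
    rw [h0, mem_invS_canon ht ht, hc0]
    simpa using hq0.1
  · intro m hm
    obtain ⟨h1, h2⟩ := canon_decomp ht m
    set k := (m % (t:ℤ)).toNat with hkdef
    set j := m / (t:ℤ) with hjdef
    rcases Nat.eq_zero_or_pos k with hk0 | hk0
    · rw [hk0] at h1
      simp only [Nat.cast_zero, add_zero] at h1
      have hj0 : j ≠ 0 := by
        intro hc
        rw [hc, mul_zero] at h1
        exact hm h1
      have e1 : m ∈ invS t core qq ↔ j ∈ Bp (qq 0) := by
        rw [h1, show (t:ℤ) * j = (t:ℤ) * j + ((0:ℕ):ℤ) from by simp,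
          mem_invS_canon ht ht, hc0, sub_zero]
      have e2 : -m ∈ invS t core qq ↔ -j ∈ Bp (qq 0) := by
        rw [h1, show -((t:ℤ) * j) = (t:ℤ) * (-j) + ((0:ℕ):ℤ) from by push_cast; ring,
          mem_invS_canon ht ht, hc0, sub_zero]
      rw [e1, e2]
      exact hq0.2 j hj0
    · have e1 : m ∈ invS t core qq ↔ j - ck t (Bp core) k ∈ Bp (qq k) := by
        rw [h1, mem_invS_canon ht h2]
      have hctk : ck t (Bp core) (t - k) = -(ck t (Bp core) k) :=
        ck_reflect ht hk0 h2 (hasB_Bp core) hcoreDD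
      have e2 : -m ∈ invS t core qq ↔ j - ck t (Bp core) k ∉ Bp (qq k) := by
        have hcast : ((t - k : ℕ) : ℤ) = (t:ℤ) - k := by push_cast [le_of_lt h2]; ring
        have heq : -m = (t:ℤ) * (-j - 1) + ((t - k : ℕ) : ℤ) := by
          rw [hcast, h1]
          push_cast
          ring
        rw [heq, mem_invS_canon ht (by omega : t - k < t), hctk,
          hconjq k hk0 h2, mem_conjS,
          show -1 - (-j - 1 - -(ck t (Bp core) k)) = j - ck t (Bp core) k from by ring]
      rw [e1, e2]
      exact not_not.symm


/-! ### Packaged forward properties -/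

lemma fwdMem {t : ℕ} (ht : 0 < t) (p : IntPartition) (hp : p.IsDoubledDistinct) :
    (fwdCore t p).IsDoubledDistinct ∧ (fwdCore t p).IsCore t ∧
      (fwdQuot t p 0).IsDoubledDistinct ∧
      (∀ k, 0 < k → k < t → fwdQuot t p (t - k) = (fwdQuot t p k).conjugate) := by
  have hdd : DDset (Bp p) := (isDD_iff p).1 hp
  refine ⟨?_, ?_, ?_, ?_⟩
  · rw [isDD_iff, Bp_fwdCore ht]
    exact ddset_coreS ht (hasB_Bp p) hdd
  · rw [isCore_iff]
    intro b hb m hm hlt hdvd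
    rw [Bp_fwdCore ht] at hb hm
    obtain ⟨hb1, hb2⟩ := canon_decomp ht b
    obtain ⟨hm1, hm2⟩ := canon_decomp ht m
    obtain ⟨d, hd⟩ := hdvd
    have hmod : b % (t:ℤ) = m % (t:ℤ) := by
      have hbm : b = m + (t:ℤ) * d := by omega
      rw [hbm, Int.add_mul_emod_self_left]
    have hb' : b / (t:ℤ) < ck t (Bp p) ((b % (t:ℤ)).toNat) := hb
    have hm' : ¬ (m / (t:ℤ) < ck t (Bp p) ((m % (t:ℤ)).toNat)) := hm
    have hkeq : (b % (t:ℤ)).toNat = (m % (t:ℤ)).toNat := by rw [hmod]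
    have hjlt : m / (t:ℤ) < b / (t:ℤ) := by
      apply mul_lt_cancel ht
      omega
    rw [hkeq] at hb'
    omega
  · rw [isDD_iff, Bp_fwdQuot ht, quotS_zero_eq ht (hasB_Bp p) hdd]
    exact ddset_res0 ht hdd
  · intro k hk0 hkt
    apply Bp_inj
    rw [Bp_fwdQuot ht, Bp_conjugate, Bp_fwdQuot ht,
      quotS_reflect ht hk0 hkt (hasB_Bp p) hdd]

lemma invDD {t : ℕ} (ht : 0 < t) (core : IntPartition) (qf : Fin t → IntPartition)
    (hdd : core.IsDoubledDistinct)
    (hq0 : (qf ⟨0, ht⟩).IsDoubledDistinct)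
    (hconj : ∀ i : Fin t, ∀ hi : i.val ≠ 0,
      qf ⟨t - i.val, Nat.sub_lt ht (Nat.pos_of_ne_zero hi)⟩ = (qf i).conjugate) :
    (invPart t core (fun k => qf ⟨k % t, Nat.mod_lt _ ht⟩)).IsDoubledDistinct := by
  rw [isDD_iff, Bp_invPart ht]
  apply ddset_invS ht
  · exact (isDD_iff core).1 hdd
  · have h00 : (⟨0 % t, Nat.mod_lt _ ht⟩ : Fin t) = ⟨0, ht⟩ := Fin.ext (Nat.zero_mod t)
    rw [h00]
    exact (isDD_iff _).1 hq0
  · intro k hk0 hkt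
    have e1 : (⟨(t - k) % t, Nat.mod_lt _ ht⟩ : Fin t) = ⟨t - k, by omega⟩ :=
      Fin.ext (Nat.mod_eq_of_lt (by omega))
    have e2 : (⟨k % t, Nat.mod_lt _ ht⟩ : Fin t) = ⟨k, hkt⟩ :=
      Fin.ext (Nat.mod_eq_of_lt hkt)
    rw [e1, e2]
    have hcj := hconj ⟨k, hkt⟩ (by simp only []; omega)
    simp only [] at hcj
    rw [hcj, Bp_conjugate]

lemma ck_fwdCore {t : ℕ} (ht : 0 < t) (p : IntPartition) {k : ℕ} (hk : k < t) :
    ck t (Bp (fwdCore t p)) k = ck t (Bp p) k := by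
  rw [ck, Bp_fwdCore ht, res_coreS ht hk, charge_Iio]

lemma leftInv {t : ℕ} (ht : 0 < t) (p : IntPartition) :
    invPart t (fwdCore t p) (fun k => fwdQuot t p (k % t)) = p := by
  apply Bp_inj
  rw [Bp_invPart ht]
  apply set_ext_of_res ht
  intro k hk
  rw [res_invS ht hk, ck_fwdCore ht p hk, Nat.mod_eq_of_lt hk, Bp_fwdQuot ht, quotS,
    shiftI_shiftI, show -(ck t (Bp p) k) + ck t (Bp p) k = 0 from by ring, shiftI_zero]

lemma rightInvRes {t : ℕ} (ht : 0 < t) (core : IntPartition) (qq : ℕ → IntPartition)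
    {k : ℕ} (hk : k < t) :
    ck t (Bp (invPart t core qq)) k = ck t (Bp core) k := by
  rw [ck, Bp_invPart ht, res_invS ht hk, charge_shiftI (hasB_Bp _), charge_Bp, ck]
  ring

lemma rightInvCore {t : ℕ} (ht : 0 < t) (core : IntPartition) (qq : ℕ → IntPartition)
    (hcore : core.IsCore t) :
    fwdCore t (invPart t core qq) = core := by
  apply Bp_inj
  rw [Bp_fwdCore ht]
  apply set_ext_of_res ht
  intro k hk
  rw [res_coreS ht hk, rightInvRes ht core qq hk, ← res_flush ht hk hcore]

lemma rightInvQuot {t : ℕ} (ht : 0 < t) (core : IntPartition) (qq : ℕ → IntPartition)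
    {k : ℕ} (hk : k < t) :
    fwdQuot t (invPart t core qq) k = qq k := by
  apply Bp_inj
  rw [Bp_fwdQuot ht, quotS, rightInvRes ht core qq hk, Bp_invPart ht, res_invS ht hk,
    shiftI_shiftI, show ck t (Bp core) k + -(ck t (Bp core) k) = 0 from by ring,
    shiftI_zero]


theorem littlewood_aux (t : ℕ) (ht : 0 < t) :
    ∃ Φ : {p : IntPartition // p.IsDoubledDistinct} ≃
      {q : IntPartition × (Fin t → IntPartition) //
        q.1.IsDoubledDistinct ∧ q.1.IsCore t ∧ (q.2 ⟨0, ht⟩).IsDoubledDistinct ∧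
        ∀ i : Fin t, ∀ _ : i.val ≠ 0,
          q.2 ⟨t - i.val, Nat.sub_lt ht (Nat.pos_of_ne_zero ‹_›)⟩ = (q.2 i).conjugate},
      ∀ p : {p : IntPartition // p.IsDoubledDistinct},
        IsLittlewood t p.1 (Φ p).1.1 (fun k => (Φ p).1.2 ⟨k % t, Nat.mod_lt _ ht⟩) ∧
        p.1.weight = (Φ p).1.1.weight + t * ∑ k : Fin t, ((Φ p).1.2 k).weight := by
  classical
  refine ⟨⟨fun p => ⟨(fwdCore t p.1, fun i : Fin t => fwdQuot t p.1 i.val),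
      (fwdMem ht p.1 p.2).1, (fwdMem ht p.1 p.2).2.1, (fwdMem ht p.1 p.2).2.2.1,
      fun i hi => (fwdMem ht p.1 p.2).2.2.2 i.val (Nat.pos_of_ne_zero hi) i.isLt⟩,
    fun q => ⟨invPart t q.1.1 (fun k => q.1.2 ⟨k % t, Nat.mod_lt _ ht⟩),
      invDD ht q.1.1 q.1.2 q.2.1 q.2.2.2.1 q.2.2.2.2⟩,
    ?_, ?_⟩, ?_⟩
  · -- left inverse
    intro p
    apply Subtype.ext
    exact leftInv ht p.1
  · -- right inverse
    intro q
    apply Subtype.ext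
    have h1 : fwdCore t (invPart t q.1.1 (fun k => q.1.2 ⟨k % t, Nat.mod_lt _ ht⟩)) =
        q.1.1 := rightInvCore ht _ _ q.2.2.1
    have h2 : ∀ i : Fin t,
        fwdQuot t (invPart t q.1.1 (fun k => q.1.2 ⟨k % t, Nat.mod_lt _ ht⟩)) i.val =
        q.1.2 i := by
      intro i
      rw [rightInvQuot ht _ _ i.isLt]
      have he : (⟨i.val % t, Nat.mod_lt _ ht⟩ : Fin t) = i := by
        apply Fin.ext
        show i.val % t = i.val
        exact Nat.mod_eq_of_lt i.isLt
      rw [he]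
    show (fwdCore t _, fun i : Fin t => fwdQuot t _ i.val) = q.1
    rw [Prod.ext_iff]
    exact ⟨h1, funext h2⟩
  · -- the properties
    intro p
    constructor
    · refine ⟨fun k => ck t (Bp p.1) k, ?_, ?_⟩
      · intro k hk j
        rw [zeroPos_iff, zeroPos_iff]
        show j ∈ Bp (fwdQuot t p.1 (k % t)) ↔ _
        rw [Nat.mod_eq_of_lt hk, Bp_fwdQuot ht, quotS]
        exact Iff.rfl
      · intro k hk j
        rw [zeroPos_iff]
        show ((t:ℤ) * (j + ck t (Bp p.1) k) + (k:ℤ) ∈ Bp (fwdCore t p.1)) ↔ j < 0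
        rw [Bp_fwdCore ht, mem_coreS_canon ht hk]
        omega
    · have hws := wsum_split ht (hasB_Bp p.1) (t := t)
      have hA : wsum (Bp p.1) = (p.1.weight : ℤ) := wsum_Bp p.1
      have hB : wsum (coreS t (Bp p.1)) = ((fwdCore t p.1).weight : ℤ) := by
        rw [← Bp_fwdCore ht, wsum_Bp]
      have hQ : ∀ k ∈ Finset.range t, wsum (quotS t (Bp p.1) k) =
          (((fwdQuot t p.1 k).weight : ℕ) : ℤ) := fun k _ => by
        rw [← Bp_fwdQuot ht, wsum_Bp]
      have hsum : ∑ k ∈ Finset.range t, wsum (quotS t (Bp p.1) k) =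
          ((∑ k : Fin t, (fwdQuot t p.1 k.val).weight : ℕ) : ℤ) := by
        rw [Finset.sum_congr rfl hQ,
          Fin.sum_univ_eq_sum_range (fun k => (fwdQuot t p.1 k).weight)]
        push_cast
        rfl
      rw [hA, hB, hsum] at hws
      have hfin : (p.1.weight : ℤ) = ((fwdCore t p.1).weight : ℤ) +
          (t:ℤ) * ((∑ k : Fin t, (fwdQuot t p.1 k.val).weight : ℕ) : ℤ) := by
        linarith
      show p.1.weight = (fwdCore t p.1).weight + t * ∑ k : Fin t, (fwdQuot t p.1 k.val).weight
      exact_mod_cast hfin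

end LW

theorem littlewood_dd_bijection (t : ℕ) (ht : 0 < t) :
    ∃ Φ : {p : IntPartition // p.IsDoubledDistinct} ≃
      {q : IntPartition × (Fin t → IntPartition) //
        q.1.IsDoubledDistinct ∧ q.1.IsCore t ∧ (q.2 ⟨0, ht⟩).IsDoubledDistinct ∧
        ∀ i : Fin t, ∀ _ : i.val ≠ 0,
          q.2 ⟨t - i.val, by have := i.isLt; omega⟩ = (q.2 i).conjugate},
      ∀ p : {p : IntPartition // p.IsDoubledDistinct},
        IsLittlewood t p.1 (Φ p).1.1 (fun k => (Φ p).1.2 ⟨k % t, Nat.mod_lt _ ht⟩) ∧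
        p.1.weight = (Φ p).1.1.weight + t * ∑ k : Fin t, ((Φ p).1.2 k).weight :=
  LW.littlewood_aux t ht
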